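/- arXiv:2010.10797 — 3 statements merged into one kernel-verified Lean document; each statement's English description precedes it below -/
import Mathlib

section
/- Let y = Rx where R = R₁ ⊗ ⋯ ⊗ R_d with i.i.d. mean-zero unit-variance entries of fourth moment Δ, M = ∏mᵢ, N = ∏nᵢ, n = max nᵢ, ℳ = max_i |x(i)|. Then for every index i, E[y(i)⁴] ≤ (Δ + 3(n−1))^d · N · ℳ⁴. -/
open MeasureTheory ProbabilityTheory Finset

lemma aux_iIndep_prod_integral {Ω : Type*} [MeasureSpace Ω]
    [IsProbabilityMeasure (volume : Measure Ω)] {ι : Type*} {f : ι → Ω → ℝ}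
    (h : iIndepFun f volume)
    (hm : ∀ i, Measurable (f i)) (hi : ∀ i, Integrable (f i) volume) (s : Finset ι) :
    Integrable (fun ω => ∏ i ∈ s, f i ω) volume ∧
      ∫ ω, ∏ i ∈ s, f i ω = ∏ i ∈ s, ∫ ω, f i ω := by
  classical
  induction s using Finset.induction_on with
  | empty => simp
  | @insert a s ha ih =>
    have hInd : IndepFun (∏ j ∈ s, f j) (f a) volume :=
      h.indepFun_finsetProd_of_notMem hm ha
    have hps : Integrable (∏ j ∈ s, f j) volume := by
      have := ih.1; simpa [Finset.prod_fn] using this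
    have hmul : Integrable ((∏ j ∈ s, f j) * f a) volume :=
      hInd.integrable_mul hps (hi a)
    have hintmul : ∫ ω, ((∏ j ∈ s, f j) * f a) ω = (∫ ω, (∏ j ∈ s, f j) ω) * ∫ ω, f a ω :=
      hInd.integral_mul_eq_mul_integral hps.aestronglyMeasurable (hi a).aestronglyMeasurable
    constructor
    · have : (fun ω => ∏ i ∈ insert a s, f i ω) = (∏ j ∈ s, f j) * f a := by
        funext ω
        simp [Finset.prod_insert ha, mul_comm]
      rw [this]; exact hmul
    · rw [Finset.prod_insert ha, ← ih.2]
      have : (fun ω => ∏ i ∈ insert a s, f i ω) = fun ω => ((∏ j ∈ s, f j) * f a) ω := by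
        funext ω
        simp [Finset.prod_insert ha, mul_comm]
      calc ∫ ω, ∏ i ∈ insert a s, f i ω = ∫ ω, ((∏ j ∈ s, f j) * f a) ω := by rw [this]
        _ = (∫ ω, (∏ j ∈ s, f j) ω) * ∫ ω, f a ω := hintmul
        _ = _ := by rw [mul_comm]; congr 1 <;> simp [Finset.prod_fn]


lemma aux_integrable_pow {Ω : Type*} [MeasureSpace Ω]
    [IsProbabilityMeasure (volume : Measure Ω)] {g : Ω → ℝ} (hm : Measurable g)
    (h4 : Integrable (fun ω => g ω ^ 4) volume) (e : ℕ) (he : e ≤ 4) :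
    Integrable (fun ω => g ω ^ e) volume := by
  refine Integrable.mono' ((integrable_const 1).add h4) ((hm.pow_const e).aestronglyMeasurable) ?_
  filter_upwards with ω
  have h40 : (0:ℝ) ≤ g ω ^ 4 := by positivity
  rw [Real.norm_eq_abs, abs_pow]
  by_cases hab : |g ω| ≤ 1
  · have : |g ω| ^ e ≤ 1 := pow_le_one₀ (abs_nonneg _) hab
    simp only [Pi.add_apply]; nlinarith
  · push_neg at hab
    have h1 : |g ω| ^ e ≤ |g ω| ^ 4 := pow_le_pow_right₀ hab.le he
    have h2 : |g ω| ^ 4 = g ω ^ 4 := by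
      rw [← abs_pow, abs_of_nonneg h40]
    simp only [Pi.add_apply]; nlinarith


noncomputable def wpat {X : Type*} [DecidableEq X] (Δ : ℝ) (a b c e : X) : ℝ :=
  if a = b ∧ b = c ∧ c = e then Δ
  else if (a = b ∧ c = e) ∨ (a = c ∧ b = e) ∨ (a = e ∧ b = c) then 1 else 0

lemma wpat_nonneg {X : Type*} [DecidableEq X] {Δ : ℝ} (hΔ : 0 ≤ Δ) (a b c e : X) :
    0 ≤ wpat Δ a b c e := by
  unfold wpat; split_ifs <;> norm_num [hΔ]

lemma aux_block_value {X : Type*} [Fintype X] [DecidableEq X] (μ : X → ℕ → ℝ) (Δ : ℝ)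
    (h0 : ∀ c, μ c 0 = 1) (h1 : ∀ c, μ c 1 = 0) (h2 : ∀ c, μ c 2 = 1) (h4 : ∀ c, μ c 4 = Δ)
    (a b c e : X) :
    ∏ y : X, μ y ((if a = y then 1 else 0) + (if b = y then 1 else 0)
        + (if c = y then 1 else 0) + (if e = y then 1 else 0)) = wpat Δ a b c e := by
  by_cases hall : a = b ∧ b = c ∧ c = e
  · obtain ⟨h₁, h₂, h₃⟩ := hall
    subst h₁; subst h₂; subst h₃
    rw [wpat, if_pos ⟨rfl, rfl, rfl⟩]
    have : ∀ y : X, μ y ((if a = y then 1 else 0) + (if a = y then 1 else 0)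
        + (if a = y then 1 else 0) + (if a = y then 1 else 0))
        = if a = y then μ y 4 else 1 := by
      intro y; by_cases hy : a = y <;> simp [hy, h0]
    rw [Finset.prod_congr rfl (fun y _ => this y), Finset.prod_ite_eq]
    simp [h4]
  · by_cases hp : (a = b ∧ c = e) ∨ (a = c ∧ b = e) ∨ (a = e ∧ b = c)
    · rw [wpat, if_neg hall, if_pos hp]
      apply Finset.prod_eq_one
      intro y _
      rcases hp with ⟨hab, hce⟩ | ⟨hac, hbe⟩ | ⟨hae, hbc⟩
      · subst hab; subst hce
        have hac : a ≠ c := fun h => hall ⟨rfl, h, rfl⟩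
        by_cases hy : a = y <;> by_cases hy' : c = y
        · exact absurd (hy.trans hy'.symm) hac
        all_goals simp [hy, hy', h0, h2]
      · subst hac; subst hbe
        have hab : a ≠ b := fun h => hall ⟨h, h.symm, h⟩
        by_cases hy : a = y <;> by_cases hy' : b = y
        · exact absurd (hy.trans hy'.symm) hab
        all_goals simp [hy, hy', h0, h2]
      · subst hae; subst hbc
        have hab : a ≠ b := fun h => hall ⟨h, rfl, h.symm⟩
        by_cases hy : a = y <;> by_cases hy' : b = y
        · exact absurd (hy.trans hy'.symm) hab
        all_goals simp [hy, hy', h0, h2]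
    · rw [wpat, if_neg hall, if_neg hp]
      push_neg at hp
      obtain ⟨hp1, hp2, hp3⟩ := hp
      -- find a column with multiplicity exactly 1
      have key : ∃ y : X, ((if a = y then 1 else 0) + (if b = y then 1 else 0)
          + (if c = y then 1 else 0) + (if e = y then 1 else 0)) = 1 := by
        by_cases hab : a = b
        · have hce : c ≠ e := hp1 hab
          by_cases hac : a = c
          · refine ⟨e, ?_⟩
            have k1 : ¬ a = e := by rw [hac]; exact hce
            have k2 : ¬ b = e := fun h => k1 (hab.trans h)
            simp [k1, k2, hce]
          · by_cases hae : a = e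
            · refine ⟨c, ?_⟩
              have k2 : ¬ b = c := fun h => hac (hab.trans h)
              have k3 : ¬ e = c := fun h => hac (hae.trans h)
              simp [hac, k2, k3]
            · refine ⟨c, ?_⟩
              have k2 : ¬ b = c := fun h => hac (hab.trans h)
              have k3 : ¬ e = c := fun h => hce h.symm
              simp [hac, k2, k3]
        · by_cases hac : a = c
          · have hbe : b ≠ e := hp2 hac
            refine ⟨b, ?_⟩
            have k2 : ¬ c = b := fun h => hab (hac.trans h)
            have k3 : ¬ e = b := fun h => hbe h.symm
            simp [hab, k2, k3]
          · by_cases hae : a = e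
            · have hbc : b ≠ c := hp3 hae
              refine ⟨b, ?_⟩
              have k2 : ¬ c = b := fun h => hbc h.symm
              have k3 : ¬ e = b := fun h => hab (hae.trans h)
              simp [hab, k2, k3]
            · refine ⟨a, ?_⟩
              have k1 : ¬ b = a := fun h => hab h.symm
              have k2 : ¬ c = a := fun h => hac h.symm
              have k3 : ¬ e = a := fun h => hae h.symm
              simp [k1, k2, k3]
      obtain ⟨y, hy⟩ := key
      refine Finset.prod_eq_zero (Finset.mem_univ y) ?_
      rw [hy, h1]

lemma wpat_eq {X : Type*} [DecidableEq X] (Δ : ℝ) (a b c e : X) :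
    wpat Δ a b c e = Δ * (if a = b ∧ b = c ∧ c = e then 1 else 0)
      + ((if a = b ∧ c = e then (1:ℝ) else 0) + (if a = c ∧ b = e then 1 else 0)
        + (if a = e ∧ b = c then 1 else 0))
      - 3 * (if a = b ∧ b = c ∧ c = e then 1 else 0) := by
  unfold wpat
  by_cases hab : a = b <;> by_cases hac : a = c <;> by_cases hae : a = e <;>
    by_cases hbc : b = c <;> by_cases hbe : b = e <;> by_cases hce : c = e <;>
    simp_all <;> ring

lemma wpat_sum {X : Type*} [Fintype X] [DecidableEq X] (Δ : ℝ) :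
    ∑ a : X, ∑ b : X, ∑ c : X, ∑ e : X, wpat Δ a b c e
      = (Fintype.card X : ℝ) * Δ + 3 * (Fintype.card X : ℝ) ^ 2
        - 3 * (Fintype.card X : ℝ) := by
  simp only [wpat_eq]
  simp [Finset.sum_add_distrib, Finset.sum_sub_distrib, Finset.sum_ite_eq, ite_and,
    Finset.mul_sum, Finset.sum_ite_irrel, Finset.sum_const_zero, Finset.sum_comm (γ := X)]
  ring

def e4equiv {X : Type*} : (Fin 4 → X) ≃ X × X × X × X where
  toFun g := (g 0, g 1, g 2, g 3)
  invFun p := ![p.1, p.2.1, p.2.2.1, p.2.2.2]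
  left_inv g := by funext t; fin_cases t <;> rfl
  right_inv p := rfl

lemma wpat_sum_fun {X : Type*} [Fintype X] [DecidableEq X] (Δ : ℝ) :
    ∑ g : Fin 4 → X, wpat Δ (g 0) (g 1) (g 2) (g 3)
      = (Fintype.card X : ℝ) * Δ + 3 * (Fintype.card X : ℝ) ^ 2
        - 3 * (Fintype.card X : ℝ) := by
  rw [← wpat_sum Δ]
  rw [Fintype.sum_equiv (e4equiv (X := X))
    (fun g => wpat Δ (g 0) (g 1) (g 2) (g 3))
    (fun p => wpat Δ p.1 p.2.1 p.2.2.1 p.2.2.2) (fun g => rfl)]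
  simp [Fintype.sum_prod_type]

lemma aux_prod_count {X : Type*} [Fintype X] [DecidableEq X] {M : Type*} [CommMonoid M]
    (h : X → M) (g : Fin 4 → X) :
    ∏ t : Fin 4, h (g t) = ∏ y : X, h y ^ (∑ t : Fin 4, if g t = y then 1 else 0) := by
  have step1 : ∀ y : X, h y ^ (∑ t : Fin 4, if g t = y then 1 else 0)
      = ∏ t : Fin 4, (if g t = y then h y else 1) := by
    intro y
    rw [← Finset.prod_pow_eq_pow_sum]
    exact Finset.prod_congr rfl fun t _ => by split_ifs <;> simp
  rw [Finset.prod_congr rfl fun y _ => step1 y, Finset.prod_comm]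
  refine Finset.prod_congr rfl fun t _ => ?_
  simp [Finset.prod_ite_eq']


/-- Fourth-moment bound for a single coordinate of `y = Rx`, where
`R = R₁ ⊗ ⋯ ⊗ R_d` has i.i.d. mean-zero unit-variance entries with fourth
moment `Δ`: `E[y(i)⁴] ≤ (Δ + 3(n−1))^d N ℳ⁴`. -/
theorem ttrp_coordinate_fourth_moment_bound {Ω : Type*} [MeasureSpace Ω]
    [IsProbabilityMeasure (volume : Measure Ω)]
    {d : ℕ} (m n : Fin d → ℕ) (Δ : ℝ)
    (R : ∀ k : Fin d, Ω → Matrix (Fin (m k)) (Fin (n k)) ℝ)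
    (hmeas : ∀ k i j, Measurable fun ω => R k ω i j)
    (hindep : iIndepFun
      (fun p : Σ k : Fin d, Fin (m k) × Fin (n k) => fun ω => R p.1 ω p.2.1 p.2.2) volume)
    (hid : ∀ p q : Σ k : Fin d, Fin (m k) × Fin (n k),
      IdentDistrib (fun ω => R p.1 ω p.2.1 p.2.2) (fun ω => R q.1 ω q.2.1 q.2.2)
        volume volume)
    (hmean : ∀ k i j, ∫ ω, R k ω i j = 0)
    (hvar : ∀ k i j, ∫ ω, (R k ω i j) ^ 2 = 1)
    (hfour : ∀ k i j, ∫ ω, (R k ω i j) ^ 4 = Δ)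
    (hint : ∀ k i j, Integrable fun ω => (R k ω i j) ^ 4)
    (x : (∀ k, Fin (n k)) → ℝ) :
    ∀ i : ∀ k, Fin (m k),
      ∫ ω, (∑ j : ∀ k, Fin (n k), (∏ k, R k ω (i k) (j k)) * x j) ^ 4
        ≤ (Δ + 3 * (((univ.sup n : ℕ) : ℝ) - 1)) ^ d *
            (∏ k, (n k : ℝ)) * (⨆ j, |x j|) ^ 4 := by

  classical
  intro i
  by_cases hn : ∀ k, 1 ≤ n k
  case neg =>
    push_neg at hn
    obtain ⟨k0, hk0⟩ := hn
    have hk0' : n k0 = 0 := by omega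
    haveI hempty : IsEmpty (∀ k, Fin (n k)) := ⟨fun j => (hk0' ▸ (j k0)).elim0⟩
    have hL : ∫ ω, (∑ j : ∀ k, Fin (n k), (∏ k, R k ω (i k) (j k)) * x j) ^ 4 = 0 := by
      simp [Finset.univ_eq_empty]
    have hR : (∏ k, (n k : ℝ)) = 0 :=
      Finset.prod_eq_zero (Finset.mem_univ k0) (by rw [hk0']; simp)
    rw [hL, hR, mul_zero, zero_mul]
  case pos =>
    -- notation
    set M4 : ℝ := ⨆ j, |x j| with hM4
    have hΔ : ∀ _ : Fin d, (0:ℝ) ≤ Δ := by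
      intro k
      rw [← hfour k (i k) ⟨0, hn k⟩]
      apply integral_nonneg
      intro ω; positivity
    set f : (Σ k : Fin d, Fin (m k) × Fin (n k)) → Ω → ℝ :=
      fun p ω => R p.1 ω p.2.1 p.2.2 with hf
    set cnt : (Fin 4 → ∀ k, Fin (n k)) → ∀ k : Fin d, Fin (n k) → ℕ :=
      fun q k y => ∑ t : Fin 4, if q t k = y then 1 else 0 with hcnt
    set Ee : (Fin 4 → ∀ k, Fin (n k)) → (Σ k : Fin d, Fin (m k) × Fin (n k)) → ℕ :=
      fun q p => if p.2.1 = i p.1 then cnt q p.1 p.2.2 else 0 with hEe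
    have hEle : ∀ q p, Ee q p ≤ 4 := by
      intro q p
      rw [hEe]
      dsimp only
      split_ifs
      · rw [hcnt]; dsimp only
        have : ∑ t : Fin 4, (if q t p.1 = p.2.2 then 1 else 0) ≤ ∑ _t : Fin 4, 1 :=
          Finset.sum_le_sum fun t _ => by split_ifs <;> omega
        simpa using this
      · omega
    have hGmeas : ∀ q p, Measurable (fun ω => f p ω ^ Ee q p) :=
      fun q p => (hmeas p.1 p.2.1 p.2.2).pow_const _
    have hGint : ∀ q p, Integrable (fun ω => f p ω ^ Ee q p) volume :=
      fun q p => aux_integrable_pow (hmeas p.1 p.2.1 p.2.2) (hint p.1 p.2.1 p.2.2) _ (hEle q p)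
    have hGindep : ∀ q, iIndepFun (fun p ω => f p ω ^ Ee q p) volume :=
      fun q => hindep.comp (fun p y => y ^ Ee q p) (fun p => measurable_id.pow_const _)
    have hprod := fun q =>
      aux_iIndep_prod_integral (hGindep q) (hGmeas q) (hGint q) Finset.univ
    -- pointwise expansion
    have hpoint : ∀ ω, (∑ j : ∀ k, Fin (n k), (∏ k, R k ω (i k) (j k)) * x j) ^ 4
        = ∑ q : Fin 4 → ∀ k, Fin (n k),
            (∏ p, f p ω ^ Ee q p) * ∏ t : Fin 4, x (q t) := by
      intro ω
      have e1 : (∑ j : ∀ k, Fin (n k), (∏ k, R k ω (i k) (j k)) * x j) ^ 4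
          = ∏ _t : Fin 4, ∑ j : ∀ k, Fin (n k), (∏ k, R k ω (i k) (j k)) * x j := by
        simp [Finset.prod_const, Finset.card_univ]
      rw [e1, Finset.prod_univ_sum, Fintype.piFinset_univ]
      refine Finset.sum_congr rfl fun q _ => ?_
      rw [Finset.prod_mul_distrib]
      congr 1
      rw [Finset.prod_comm, ← Finset.univ_sigma_univ, Finset.prod_sigma]
      refine Finset.prod_congr rfl fun k _ => ?_
      rw [Fintype.prod_prod_type]
      rw [Finset.prod_eq_single (i k)
        (fun r _ hr => by
          refine Finset.prod_eq_one fun c _ => ?_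
          simp [hEe, hr])
        (fun h => absurd (Finset.mem_univ _) h)]
      rw [aux_prod_count (fun y => R k ω (i k) y) (fun t => q t k)]
      refine Finset.prod_congr rfl fun y _ => ?_
      rw [hEe]; dsimp only
      rw [if_pos rfl]
    -- value of each term
    have hval : ∀ q : Fin 4 → ∀ k, Fin (n k),
        ∏ p, ∫ ω, f p ω ^ Ee q p
          = ∏ k, wpat Δ (q 0 k) (q 1 k) (q 2 k) (q 3 k) := by
      intro q
      rw [← Finset.univ_sigma_univ, Finset.prod_sigma]
      refine Finset.prod_congr rfl fun k _ => ?_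
      rw [Fintype.prod_prod_type]
      rw [Finset.prod_eq_single (i k)
        (fun r _ hr => by
          refine Finset.prod_eq_one fun c _ => ?_
          simp [hEe, hr])
        (fun h => absurd (Finset.mem_univ _) h)]
      have hc : ∀ c : Fin (n k), Ee q ⟨k, (i k, c)⟩ = cnt q k c := by
        intro c; simp [hEe]
      rw [Finset.prod_congr rfl fun c _ => by rw [hc c]]
      have hcnt4 : ∀ c : Fin (n k), cnt q k c
          = (if q 0 k = c then 1 else 0) + (if q 1 k = c then 1 else 0)
            + (if q 2 k = c then 1 else 0) + (if q 3 k = c then 1 else 0) := by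
        intro c; rw [hcnt]; exact Fin.sum_univ_four _
      rw [Finset.prod_congr rfl fun c _ => by rw [hcnt4 c]]
      exact aux_block_value (fun c e => ∫ ω, R k ω (i k) c ^ e) Δ
        (fun c => by simp)
        (fun c => by simpa using hmean k (i k) c)
        (fun c => hvar k (i k) c)
        (fun c => hfour k (i k) c)
        (q 0 k) (q 1 k) (q 2 k) (q 3 k)
    -- nonneg facts
    have hJne : Nonempty (∀ k, Fin (n k)) := ⟨fun k => ⟨0, hn k⟩⟩
    obtain ⟨j0⟩ := hJne
    have hMbdd : BddAbove (Set.range fun j => |x j|) := (Set.finite_range _).bddAbove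
    have hMle : ∀ j, |x j| ≤ M4 := fun j => le_ciSup hMbdd j
    have hM0 : 0 ≤ M4 := le_trans (abs_nonneg _) (hMle j0)
    have hwnn : ∀ q : Fin 4 → ∀ k, Fin (n k),
        0 ≤ ∏ k, wpat Δ (q 0 k) (q 1 k) (q 2 k) (q 3 k) :=
      fun q => Finset.prod_nonneg fun k _ => wpat_nonneg (hΔ k) _ _ _ _
    calc ∫ ω, (∑ j : ∀ k, Fin (n k), (∏ k, R k ω (i k) (j k)) * x j) ^ 4
        = ∑ q : Fin 4 → ∀ k, Fin (n k),
            (∏ p, ∫ ω, f p ω ^ Ee q p) * ∏ t : Fin 4, x (q t) := by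
          rw [integral_congr_ae (Filter.Eventually.of_forall hpoint)]
          rw [integral_finset_sum _ (fun q _ => ((hprod q).1).mul_const _)]
          refine Finset.sum_congr rfl fun q _ => ?_
          rw [integral_mul_const, (hprod q).2]
      _ = ∑ q : Fin 4 → ∀ k, Fin (n k),
            (∏ k, wpat Δ (q 0 k) (q 1 k) (q 2 k) (q 3 k)) * ∏ t : Fin 4, x (q t) := by
          exact Finset.sum_congr rfl fun q _ => by rw [hval q]
      _ ≤ ∑ q : Fin 4 → ∀ k, Fin (n k),
            (∏ k, wpat Δ (q 0 k) (q 1 k) (q 2 k) (q 3 k)) * M4 ^ 4 := by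
          refine Finset.sum_le_sum fun q _ => ?_
          refine mul_le_mul_of_nonneg_left ?_ (hwnn q)
          calc ∏ t : Fin 4, x (q t) ≤ |∏ t : Fin 4, x (q t)| := le_abs_self _
            _ = ∏ t : Fin 4, |x (q t)| := Finset.abs_prod _ _
            _ ≤ ∏ _t : Fin 4, M4 :=
                Finset.prod_le_prod (fun t _ => abs_nonneg _) (fun t _ => hMle (q t))
            _ = M4 ^ 4 := by simp [Finset.prod_const, Finset.card_univ]
      _ = (∑ q : Fin 4 → ∀ k, Fin (n k),
            ∏ k, wpat Δ (q 0 k) (q 1 k) (q 2 k) (q 3 k)) * M4 ^ 4 := by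
          rw [Finset.sum_mul]
      _ = (∏ k, ((n k : ℝ) * Δ + 3 * (n k : ℝ) ^ 2 - 3 * (n k : ℝ))) * M4 ^ 4 := by
          congr 1
          rw [Fintype.sum_equiv (Equiv.piComm fun (_ : Fin 4) (k : Fin d) => Fin (n k))
            (fun q => ∏ k, wpat Δ (q 0 k) (q 1 k) (q 2 k) (q 3 k))
            (fun q' => ∏ k, wpat Δ (q' k 0) (q' k 1) (q' k 2) (q' k 3))
            (fun q => rfl)]
          rw [show (univ : Finset ((k : Fin d) → Fin 4 → Fin (n k)))
              = Fintype.piFinset (fun _ => univ) from (Fintype.piFinset_univ).symm]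
          rw [← Finset.prod_univ_sum (t := fun _ : Fin d => (univ : Finset (Fin 4 → Fin _)))
            (f := fun (k : Fin d) (g : Fin 4 → Fin (n k)) => wpat Δ (g 0) (g 1) (g 2) (g 3))]
          refine Finset.prod_congr rfl fun k _ => ?_
          rw [wpat_sum_fun]
          simp
      _ ≤ (∏ k, (n k : ℝ) * (Δ + 3 * (((univ.sup n : ℕ) : ℝ) - 1))) * M4 ^ 4 := by
          refine mul_le_mul_of_nonneg_right ?_ (by positivity)
          refine Finset.prod_le_prod (fun k _ => ?_) (fun k _ => ?_)
          · have h1 : (1:ℝ) ≤ (n k : ℝ) := by exact_mod_cast hn k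
            nlinarith [hΔ k]
          · have h1 : (1:ℝ) ≤ (n k : ℝ) := by exact_mod_cast hn k
            have h2 : (n k : ℝ) ≤ ((univ.sup n : ℕ) : ℝ) := by
              exact_mod_cast Nat.cast_le.mpr (Finset.le_sup (Finset.mem_univ k))
            nlinarith
      _ = (Δ + 3 * (((univ.sup n : ℕ) : ℝ) - 1)) ^ d * (∏ k, (n k : ℝ)) * M4 ^ 4 := by
          rw [Finset.prod_mul_distrib]
          simp [Finset.prod_const, Finset.card_univ, mul_comm]
end

section
/- Let R₁ = [[a₁,a₂],[b₁,b₂]] and R₂ = [[c₁,c₂],[d₁,d₂]] be independent 2×2 random matrices with i.i.d. mean-zero, variance-one entries with finite fourth moment, and let y = (R₁ ⊗ R₂)x for a fixed x ∈ ℝ⁴. Then Cov(y(1)², y(3)²) = (x₁²+x₃²)² Var(c₁²) + (x₂²+x₄²)² Var(c₂²) + 4(x₁x₂+x₃x₄)². -/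
open MeasureTheory ProbabilityTheory

/-- `y(1)` of the 2×2 Kronecker example:
`y₁ = a₁c₁x₁ + a₁c₂x₂ + a₂c₁x₃ + a₂c₂x₄`. -/
def kronCoord (a1 a2 c1 c2 x1 x2 x3 x4 : ℝ) : ℝ :=
  a1 * c1 * x1 + a1 * c2 * x2 + a2 * c1 * x3 + a2 * c2 * x4

set_option linter.unnecessarySimpa false

lemma pow_int {Ω : Type*} [MeasureSpace Ω] [IsProbabilityMeasure (volume : Measure Ω)]
    (f : Ω → ℝ) (hf : Measurable f) (h4 : Integrable fun ω => f ω ^ 4)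
    (k : ℕ) (hk : k ≤ 4) : Integrable fun ω => f ω ^ k := by
  have hb : Integrable fun ω => (1 : ℝ) + f ω ^ 4 := (integrable_const 1).add h4
  refine hb.mono ((hf.pow_const k).aestronglyMeasurable) (Filter.Eventually.of_forall fun ω => ?_)
  have h0 : (0:ℝ) ≤ f ω ^ 4 := by positivity
  rcases le_or_gt |f ω| 1 with h | h
  · calc ‖f ω ^ k‖ = |f ω| ^ k := by rw [Real.norm_eq_abs, abs_pow]
    _ ≤ 1 := pow_le_one₀ (abs_nonneg _) h
    _ ≤ ‖1 + f ω ^ 4‖ := by rw [Real.norm_eq_abs, abs_of_nonneg (by linarith)]; linarith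
  · calc ‖f ω ^ k‖ = |f ω| ^ k := by rw [Real.norm_eq_abs, abs_pow]
    _ ≤ |f ω| ^ 4 := pow_le_pow_right₀ h.le hk
    _ ≤ ‖1 + f ω ^ 4‖ := by
        have h1 : |f ω| ^ 4 = f ω ^ 4 := by
          rw [← abs_pow, abs_of_nonneg h0]
        rw [Real.norm_eq_abs, h1, abs_of_nonneg (show (0:ℝ) ≤ 1 + f ω ^ 4 by linarith)]
        linarith

lemma master {Ω : Type*} [MeasureSpace Ω] [IsProbabilityMeasure (volume : Measure Ω)]
    (e : Fin 8 → Ω → ℝ) (hmeas : ∀ p, Measurable (e p))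
    (hindep : iIndepFun e volume)
    (hint : ∀ p, Integrable fun ω => (e p ω) ^ 4)
    (k : Fin 8 → ℕ) (hk : ∀ p, k p ≤ 4) (s : Finset (Fin 8)) :
    Integrable (fun ω => ∏ p ∈ s, e p ω ^ k p) ∧
      (∫ ω, ∏ p ∈ s, e p ω ^ k p) = ∏ p ∈ s, ∫ ω, e p ω ^ k p := by
  classical
  have hg : iIndepFun (fun p => (fun x => x ^ k p) ∘ e p) volume :=
    hindep.comp _ (fun p => measurable_id.pow_const (k p))
  have hgm : ∀ p, Measurable ((fun x => x ^ k p) ∘ e p) :=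
    fun p => (hmeas p).pow_const (k p)
  induction s using Finset.induction_on with
  | empty => simp
  | @insert a s hi ih =>
    have hip : IndepFun (∏ j ∈ s, (fun x => x ^ k j) ∘ e j) ((fun x => x ^ k a) ∘ e a) volume :=
      hg.indepFun_finsetProd_of_notMem hgm hi
    have hprodeq : (∏ j ∈ s, (fun x => x ^ k j) ∘ e j) = fun ω => ∏ p ∈ s, e p ω ^ k p := by
      funext ω; simp [Finset.prod_apply]
    rw [hprodeq] at hip
    have hia : Integrable ((fun x => x ^ k a) ∘ e a) :=
      pow_int (e a) (hmeas a) (hint a) (k a) (hk a)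
    have hint' : Integrable (fun ω => e a ω ^ k a * ∏ p ∈ s, e p ω ^ k p) := by
      have := hip.symm.integrable_mul hia ih.1
      exact this
    constructor
    · simpa [Finset.prod_insert hi] using hint'
    · rw [Finset.prod_insert hi]
      have := hip.symm.integral_mul_eq_mul_integral hia.aestronglyMeasurable ih.1.aestronglyMeasurable
      simp only [Function.comp] at this
      calc (∫ ω, ∏ p ∈ insert a s, e p ω ^ k p)
          = ∫ ω, e a ω ^ k a * ∏ p ∈ s, e p ω ^ k p := by
            congr 1; funext ω; rw [Finset.prod_insert hi]
        _ = (∫ ω, e a ω ^ k a) * ∫ ω, ∏ p ∈ s, e p ω ^ k p := by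
            simpa [Pi.mul_apply] using this
        _ = _ := by rw [ih.2]

lemma mom6 {Ω : Type*} [MeasureSpace Ω] [IsProbabilityMeasure (volume : Measure Ω)]
    (e : Fin 8 → Ω → ℝ) (hmeas : ∀ p, Measurable (e p))
    (hindep : iIndepFun e volume)
    (hint : ∀ p, Integrable fun ω => (e p ω) ^ 4)
    (k0 k1 k2 k3 k4 k5 : ℕ) (h0 : k0 ≤ 4) (h1 : k1 ≤ 4) (h2 : k2 ≤ 4)
    (h3 : k3 ≤ 4) (h4 : k4 ≤ 4) (h5 : k5 ≤ 4) :
    Integrable (fun ω => e 0 ω ^ k0 * e 1 ω ^ k1 * e 2 ω ^ k2 * e 3 ω ^ k3 *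
        e 4 ω ^ k4 * e 5 ω ^ k5) ∧
      (∫ ω, e 0 ω ^ k0 * e 1 ω ^ k1 * e 2 ω ^ k2 * e 3 ω ^ k3 * e 4 ω ^ k4 * e 5 ω ^ k5)
        = (∫ ω, e 0 ω ^ k0) * (∫ ω, e 1 ω ^ k1) * (∫ ω, e 2 ω ^ k2) * (∫ ω, e 3 ω ^ k3) *
          (∫ ω, e 4 ω ^ k4) * (∫ ω, e 5 ω ^ k5) := by
  have h := master e hmeas hindep hint ![k0,k1,k2,k3,k4,k5,0,0]
    (by intro p; fin_cases p <;>
      first | exact h0 | exact h1 | exact h2 | exact h3 | exact h4 | exact h5 | exact Nat.zero_le 4)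
    Finset.univ
  simp only [Fin.prod_univ_eight] at h
  replace h : Integrable (fun ω => e 0 ω ^ k0 * e 1 ω ^ k1 * e 2 ω ^ k2 * e 3 ω ^ k3 *
        e 4 ω ^ k4 * e 5 ω ^ k5 * e 6 ω ^ 0 * e 7 ω ^ 0) ∧
      (∫ ω, e 0 ω ^ k0 * e 1 ω ^ k1 * e 2 ω ^ k2 * e 3 ω ^ k3 * e 4 ω ^ k4 * e 5 ω ^ k5 *
          e 6 ω ^ 0 * e 7 ω ^ 0)
        = (∫ ω, e 0 ω ^ k0) * (∫ ω, e 1 ω ^ k1) * (∫ ω, e 2 ω ^ k2) * (∫ ω, e 3 ω ^ k3) *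
          (∫ ω, e 4 ω ^ k4) * (∫ ω, e 5 ω ^ k5) * (∫ ω, e 6 ω ^ 0) * (∫ ω, e 7 ω ^ 0) := h
  simpa only [pow_zero, mul_one, integral_const, measure_univ, probReal_univ, ENNReal.toReal_one,
    smul_eq_mul] using h

lemma integrable_sum_list {Ω : Type*} [MeasureSpace Ω] (l : List (Ω → ℝ))
    (hl : ∀ f ∈ l, Integrable f) :
    Integrable (fun ω => (l.map (fun f => f ω)).sum) := by
  induction l with
  | nil => simpa using integrable_const (0:ℝ)
  | cons f l ih =>
    simp only [List.map_cons, List.sum_cons]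
    exact (hl f (List.mem_cons_self)).add (ih fun g hg => hl g (List.mem_cons_of_mem f hg))

lemma integral_sum_list {Ω : Type*} [MeasureSpace Ω] (l : List (Ω → ℝ))
    (hl : ∀ f ∈ l, Integrable f) :
    (∫ ω, (l.map (fun f => f ω)).sum) = (l.map (fun f => ∫ ω, f ω)).sum := by
  induction l with
  | nil => simp
  | cons f l ih =>
    simp only [List.map_cons, List.sum_cons]
    rw [integral_add (hl f (List.mem_cons_self))
      (integrable_sum_list l fun g hg => hl g (List.mem_cons_of_mem f hg)),
      ih fun g hg => hl g (List.mem_cons_of_mem f hg)]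

set_option maxHeartbeats 0 in
set_option maxRecDepth 8000 in
/-- Covariance of squared coordinates in the 2×2 Kronecker example:
`Cov(y(1)², y(3)²) = (x₁²+x₃²)² Var(c₁²) + (x₂²+x₄²)² Var(c₂²) + 4(x₁x₂+x₃x₄)²`. -/
theorem kron_two_by_two_cov {Ω : Type*} [MeasureSpace Ω]
    [IsProbabilityMeasure (volume : Measure Ω)]
    (e : Fin 8 → Ω → ℝ)
    (hmeas : ∀ p, Measurable (e p))
    (hindep : iIndepFun e volume)
    (hid : ∀ p q, IdentDistrib (e p) (e q) volume volume)
    (hmean : ∀ p, ∫ ω, e p ω = 0)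
    (hvar : ∀ p, ∫ ω, (e p ω) ^ 2 = 1)
    (hint : ∀ p, Integrable fun ω => (e p ω) ^ 4)
    (x1 x2 x3 x4 : ℝ) :
    -- entries: a₁ = e 0, a₂ = e 1, b₁ = e 2, b₂ = e 3, c₁ = e 4, c₂ = e 5, d₁ = e 6, d₂ = e 7
    (∫ ω, (kronCoord (e 0 ω) (e 1 ω) (e 4 ω) (e 5 ω) x1 x2 x3 x4) ^ 2 *
          (kronCoord (e 2 ω) (e 3 ω) (e 4 ω) (e 5 ω) x1 x2 x3 x4) ^ 2)
      - (∫ ω, (kronCoord (e 0 ω) (e 1 ω) (e 4 ω) (e 5 ω) x1 x2 x3 x4) ^ 2) *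
        (∫ ω, (kronCoord (e 2 ω) (e 3 ω) (e 4 ω) (e 5 ω) x1 x2 x3 x4) ^ 2)
      = (x1 ^ 2 + x3 ^ 2) ^ 2 * ((∫ ω, (e 4 ω) ^ 4) - (∫ ω, (e 4 ω) ^ 2) ^ 2)
        + (x2 ^ 2 + x4 ^ 2) ^ 2 * ((∫ ω, (e 5 ω) ^ 4) - (∫ ω, (e 5 ω) ^ 2) ^ 2)
        + 4 * (x1 * x2 + x3 * x4) ^ 2 := by
  have M1_0 := mom6 e hmeas hindep hint 0 2 0 2 0 4 (by norm_num) (by norm_num) (by norm_num) (by norm_num) (by norm_num) (by norm_num)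
  have M1_1 := mom6 e hmeas hindep hint 0 2 0 2 1 3 (by norm_num) (by norm_num) (by norm_num) (by norm_num) (by norm_num) (by norm_num)
  have M1_2 := mom6 e hmeas hindep hint 0 2 0 2 2 2 (by norm_num) (by norm_num) (by norm_num) (by norm_num) (by norm_num) (by norm_num)
  have M1_3 := mom6 e hmeas hindep hint 0 2 0 2 3 1 (by norm_num) (by norm_num) (by norm_num) (by norm_num) (by norm_num) (by norm_num)
  have M1_4 := mom6 e hmeas hindep hint 0 2 0 2 4 0 (by norm_num) (by norm_num) (by norm_num) (by norm_num) (by norm_num) (by norm_num)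
  have M1_5 := mom6 e hmeas hindep hint 0 2 1 1 0 4 (by norm_num) (by norm_num) (by norm_num) (by norm_num) (by norm_num) (by norm_num)
  have M1_6 := mom6 e hmeas hindep hint 0 2 1 1 1 3 (by norm_num) (by norm_num) (by norm_num) (by norm_num) (by norm_num) (by norm_num)
  have M1_7 := mom6 e hmeas hindep hint 0 2 1 1 2 2 (by norm_num) (by norm_num) (by norm_num) (by norm_num) (by norm_num) (by norm_num)
  have M1_8 := mom6 e hmeas hindep hint 0 2 1 1 3 1 (by norm_num) (by norm_num) (by norm_num) (by norm_num) (by norm_num) (by norm_num)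
  have M1_9 := mom6 e hmeas hindep hint 0 2 1 1 4 0 (by norm_num) (by norm_num) (by norm_num) (by norm_num) (by norm_num) (by norm_num)
  have M1_10 := mom6 e hmeas hindep hint 0 2 2 0 0 4 (by norm_num) (by norm_num) (by norm_num) (by norm_num) (by norm_num) (by norm_num)
  have M1_11 := mom6 e hmeas hindep hint 0 2 2 0 1 3 (by norm_num) (by norm_num) (by norm_num) (by norm_num) (by norm_num) (by norm_num)
  have M1_12 := mom6 e hmeas hindep hint 0 2 2 0 2 2 (by norm_num) (by norm_num) (by norm_num) (by norm_num) (by norm_num) (by norm_num)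
  have M1_13 := mom6 e hmeas hindep hint 0 2 2 0 3 1 (by norm_num) (by norm_num) (by norm_num) (by norm_num) (by norm_num) (by norm_num)
  have M1_14 := mom6 e hmeas hindep hint 0 2 2 0 4 0 (by norm_num) (by norm_num) (by norm_num) (by norm_num) (by norm_num) (by norm_num)
  have M1_15 := mom6 e hmeas hindep hint 1 1 0 2 0 4 (by norm_num) (by norm_num) (by norm_num) (by norm_num) (by norm_num) (by norm_num)
  have M1_16 := mom6 e hmeas hindep hint 1 1 0 2 1 3 (by norm_num) (by norm_num) (by norm_num) (by norm_num) (by norm_num) (by norm_num)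
  have M1_17 := mom6 e hmeas hindep hint 1 1 0 2 2 2 (by norm_num) (by norm_num) (by norm_num) (by norm_num) (by norm_num) (by norm_num)
  have M1_18 := mom6 e hmeas hindep hint 1 1 0 2 3 1 (by norm_num) (by norm_num) (by norm_num) (by norm_num) (by norm_num) (by norm_num)
  have M1_19 := mom6 e hmeas hindep hint 1 1 0 2 4 0 (by norm_num) (by norm_num) (by norm_num) (by norm_num) (by norm_num) (by norm_num)
  have M1_20 := mom6 e hmeas hindep hint 1 1 1 1 0 4 (by norm_num) (by norm_num) (by norm_num) (by norm_num) (by norm_num) (by norm_num)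
  have M1_21 := mom6 e hmeas hindep hint 1 1 1 1 1 3 (by norm_num) (by norm_num) (by norm_num) (by norm_num) (by norm_num) (by norm_num)
  have M1_22 := mom6 e hmeas hindep hint 1 1 1 1 2 2 (by norm_num) (by norm_num) (by norm_num) (by norm_num) (by norm_num) (by norm_num)
  have M1_23 := mom6 e hmeas hindep hint 1 1 1 1 3 1 (by norm_num) (by norm_num) (by norm_num) (by norm_num) (by norm_num) (by norm_num)
  have M1_24 := mom6 e hmeas hindep hint 1 1 1 1 4 0 (by norm_num) (by norm_num) (by norm_num) (by norm_num) (by norm_num) (by norm_num)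
  have M1_25 := mom6 e hmeas hindep hint 1 1 2 0 0 4 (by norm_num) (by norm_num) (by norm_num) (by norm_num) (by norm_num) (by norm_num)
  have M1_26 := mom6 e hmeas hindep hint 1 1 2 0 1 3 (by norm_num) (by norm_num) (by norm_num) (by norm_num) (by norm_num) (by norm_num)
  have M1_27 := mom6 e hmeas hindep hint 1 1 2 0 2 2 (by norm_num) (by norm_num) (by norm_num) (by norm_num) (by norm_num) (by norm_num)
  have M1_28 := mom6 e hmeas hindep hint 1 1 2 0 3 1 (by norm_num) (by norm_num) (by norm_num) (by norm_num) (by norm_num) (by norm_num)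
  have M1_29 := mom6 e hmeas hindep hint 1 1 2 0 4 0 (by norm_num) (by norm_num) (by norm_num) (by norm_num) (by norm_num) (by norm_num)
  have M1_30 := mom6 e hmeas hindep hint 2 0 0 2 0 4 (by norm_num) (by norm_num) (by norm_num) (by norm_num) (by norm_num) (by norm_num)
  have M1_31 := mom6 e hmeas hindep hint 2 0 0 2 1 3 (by norm_num) (by norm_num) (by norm_num) (by norm_num) (by norm_num) (by norm_num)
  have M1_32 := mom6 e hmeas hindep hint 2 0 0 2 2 2 (by norm_num) (by norm_num) (by norm_num) (by norm_num) (by norm_num) (by norm_num)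
  have M1_33 := mom6 e hmeas hindep hint 2 0 0 2 3 1 (by norm_num) (by norm_num) (by norm_num) (by norm_num) (by norm_num) (by norm_num)
  have M1_34 := mom6 e hmeas hindep hint 2 0 0 2 4 0 (by norm_num) (by norm_num) (by norm_num) (by norm_num) (by norm_num) (by norm_num)
  have M1_35 := mom6 e hmeas hindep hint 2 0 1 1 0 4 (by norm_num) (by norm_num) (by norm_num) (by norm_num) (by norm_num) (by norm_num)
  have M1_36 := mom6 e hmeas hindep hint 2 0 1 1 1 3 (by norm_num) (by norm_num) (by norm_num) (by norm_num) (by norm_num) (by norm_num)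
  have M1_37 := mom6 e hmeas hindep hint 2 0 1 1 2 2 (by norm_num) (by norm_num) (by norm_num) (by norm_num) (by norm_num) (by norm_num)
  have M1_38 := mom6 e hmeas hindep hint 2 0 1 1 3 1 (by norm_num) (by norm_num) (by norm_num) (by norm_num) (by norm_num) (by norm_num)
  have M1_39 := mom6 e hmeas hindep hint 2 0 1 1 4 0 (by norm_num) (by norm_num) (by norm_num) (by norm_num) (by norm_num) (by norm_num)
  have M1_40 := mom6 e hmeas hindep hint 2 0 2 0 0 4 (by norm_num) (by norm_num) (by norm_num) (by norm_num) (by norm_num) (by norm_num)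
  have M1_41 := mom6 e hmeas hindep hint 2 0 2 0 1 3 (by norm_num) (by norm_num) (by norm_num) (by norm_num) (by norm_num) (by norm_num)
  have M1_42 := mom6 e hmeas hindep hint 2 0 2 0 2 2 (by norm_num) (by norm_num) (by norm_num) (by norm_num) (by norm_num) (by norm_num)
  have M1_43 := mom6 e hmeas hindep hint 2 0 2 0 3 1 (by norm_num) (by norm_num) (by norm_num) (by norm_num) (by norm_num) (by norm_num)
  have M1_44 := mom6 e hmeas hindep hint 2 0 2 0 4 0 (by norm_num) (by norm_num) (by norm_num) (by norm_num) (by norm_num) (by norm_num)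
  have I1_0 : Integrable (fun ω => (x4^4) * (e 0 ω ^ 0 * e 1 ω ^ 2 * e 2 ω ^ 0 * e 3 ω ^ 2 * e 4 ω ^ 0 * e 5 ω ^ 4)) := (M1_0).1.const_mul _
  have I1_1 : Integrable (fun ω => (4*x3*x4^3) * (e 0 ω ^ 0 * e 1 ω ^ 2 * e 2 ω ^ 0 * e 3 ω ^ 2 * e 4 ω ^ 1 * e 5 ω ^ 3)) := (M1_1).1.const_mul _
  have I1_2 : Integrable (fun ω => (6*x3^2*x4^2) * (e 0 ω ^ 0 * e 1 ω ^ 2 * e 2 ω ^ 0 * e 3 ω ^ 2 * e 4 ω ^ 2 * e 5 ω ^ 2)) := (M1_2).1.const_mul _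
  have I1_3 : Integrable (fun ω => (4*x3^3*x4) * (e 0 ω ^ 0 * e 1 ω ^ 2 * e 2 ω ^ 0 * e 3 ω ^ 2 * e 4 ω ^ 3 * e 5 ω ^ 1)) := (M1_3).1.const_mul _
  have I1_4 : Integrable (fun ω => (x3^4) * (e 0 ω ^ 0 * e 1 ω ^ 2 * e 2 ω ^ 0 * e 3 ω ^ 2 * e 4 ω ^ 4 * e 5 ω ^ 0)) := (M1_4).1.const_mul _
  have I1_5 : Integrable (fun ω => (2*x2*x4^3) * (e 0 ω ^ 0 * e 1 ω ^ 2 * e 2 ω ^ 1 * e 3 ω ^ 1 * e 4 ω ^ 0 * e 5 ω ^ 4)) := (M1_5).1.const_mul _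
  have I1_6 : Integrable (fun ω => (6*x2*x3*x4^2 + 2*x1*x4^3) * (e 0 ω ^ 0 * e 1 ω ^ 2 * e 2 ω ^ 1 * e 3 ω ^ 1 * e 4 ω ^ 1 * e 5 ω ^ 3)) := (M1_6).1.const_mul _
  have I1_7 : Integrable (fun ω => (6*x2*x3^2*x4 + 6*x1*x3*x4^2) * (e 0 ω ^ 0 * e 1 ω ^ 2 * e 2 ω ^ 1 * e 3 ω ^ 1 * e 4 ω ^ 2 * e 5 ω ^ 2)) := (M1_7).1.const_mul _
  have I1_8 : Integrable (fun ω => (2*x2*x3^3 + 6*x1*x3^2*x4) * (e 0 ω ^ 0 * e 1 ω ^ 2 * e 2 ω ^ 1 * e 3 ω ^ 1 * e 4 ω ^ 3 * e 5 ω ^ 1)) := (M1_8).1.const_mul _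
  have I1_9 : Integrable (fun ω => (2*x1*x3^3) * (e 0 ω ^ 0 * e 1 ω ^ 2 * e 2 ω ^ 1 * e 3 ω ^ 1 * e 4 ω ^ 4 * e 5 ω ^ 0)) := (M1_9).1.const_mul _
  have I1_10 : Integrable (fun ω => (x2^2*x4^2) * (e 0 ω ^ 0 * e 1 ω ^ 2 * e 2 ω ^ 2 * e 3 ω ^ 0 * e 4 ω ^ 0 * e 5 ω ^ 4)) := (M1_10).1.const_mul _
  have I1_11 : Integrable (fun ω => (2*x2^2*x3*x4 + 2*x1*x2*x4^2) * (e 0 ω ^ 0 * e 1 ω ^ 2 * e 2 ω ^ 2 * e 3 ω ^ 0 * e 4 ω ^ 1 * e 5 ω ^ 3)) := (M1_11).1.const_mul _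
  have I1_12 : Integrable (fun ω => (x2^2*x3^2 + 4*x1*x2*x3*x4 + x1^2*x4^2) * (e 0 ω ^ 0 * e 1 ω ^ 2 * e 2 ω ^ 2 * e 3 ω ^ 0 * e 4 ω ^ 2 * e 5 ω ^ 2)) := (M1_12).1.const_mul _
  have I1_13 : Integrable (fun ω => (2*x1*x2*x3^2 + 2*x1^2*x3*x4) * (e 0 ω ^ 0 * e 1 ω ^ 2 * e 2 ω ^ 2 * e 3 ω ^ 0 * e 4 ω ^ 3 * e 5 ω ^ 1)) := (M1_13).1.const_mul _
  have I1_14 : Integrable (fun ω => (x1^2*x3^2) * (e 0 ω ^ 0 * e 1 ω ^ 2 * e 2 ω ^ 2 * e 3 ω ^ 0 * e 4 ω ^ 4 * e 5 ω ^ 0)) := (M1_14).1.const_mul _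
  have I1_15 : Integrable (fun ω => (2*x2*x4^3) * (e 0 ω ^ 1 * e 1 ω ^ 1 * e 2 ω ^ 0 * e 3 ω ^ 2 * e 4 ω ^ 0 * e 5 ω ^ 4)) := (M1_15).1.const_mul _
  have I1_16 : Integrable (fun ω => (6*x2*x3*x4^2 + 2*x1*x4^3) * (e 0 ω ^ 1 * e 1 ω ^ 1 * e 2 ω ^ 0 * e 3 ω ^ 2 * e 4 ω ^ 1 * e 5 ω ^ 3)) := (M1_16).1.const_mul _
  have I1_17 : Integrable (fun ω => (6*x2*x3^2*x4 + 6*x1*x3*x4^2) * (e 0 ω ^ 1 * e 1 ω ^ 1 * e 2 ω ^ 0 * e 3 ω ^ 2 * e 4 ω ^ 2 * e 5 ω ^ 2)) := (M1_17).1.const_mul _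
  have I1_18 : Integrable (fun ω => (2*x2*x3^3 + 6*x1*x3^2*x4) * (e 0 ω ^ 1 * e 1 ω ^ 1 * e 2 ω ^ 0 * e 3 ω ^ 2 * e 4 ω ^ 3 * e 5 ω ^ 1)) := (M1_18).1.const_mul _
  have I1_19 : Integrable (fun ω => (2*x1*x3^3) * (e 0 ω ^ 1 * e 1 ω ^ 1 * e 2 ω ^ 0 * e 3 ω ^ 2 * e 4 ω ^ 4 * e 5 ω ^ 0)) := (M1_19).1.const_mul _
  have I1_20 : Integrable (fun ω => (4*x2^2*x4^2) * (e 0 ω ^ 1 * e 1 ω ^ 1 * e 2 ω ^ 1 * e 3 ω ^ 1 * e 4 ω ^ 0 * e 5 ω ^ 4)) := (M1_20).1.const_mul _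
  have I1_21 : Integrable (fun ω => (8*x2^2*x3*x4 + 8*x1*x2*x4^2) * (e 0 ω ^ 1 * e 1 ω ^ 1 * e 2 ω ^ 1 * e 3 ω ^ 1 * e 4 ω ^ 1 * e 5 ω ^ 3)) := (M1_21).1.const_mul _
  have I1_22 : Integrable (fun ω => (4*x2^2*x3^2 + 16*x1*x2*x3*x4 + 4*x1^2*x4^2) * (e 0 ω ^ 1 * e 1 ω ^ 1 * e 2 ω ^ 1 * e 3 ω ^ 1 * e 4 ω ^ 2 * e 5 ω ^ 2)) := (M1_22).1.const_mul _
  have I1_23 : Integrable (fun ω => (8*x1*x2*x3^2 + 8*x1^2*x3*x4) * (e 0 ω ^ 1 * e 1 ω ^ 1 * e 2 ω ^ 1 * e 3 ω ^ 1 * e 4 ω ^ 3 * e 5 ω ^ 1)) := (M1_23).1.const_mul _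
  have I1_24 : Integrable (fun ω => (4*x1^2*x3^2) * (e 0 ω ^ 1 * e 1 ω ^ 1 * e 2 ω ^ 1 * e 3 ω ^ 1 * e 4 ω ^ 4 * e 5 ω ^ 0)) := (M1_24).1.const_mul _
  have I1_25 : Integrable (fun ω => (2*x2^3*x4) * (e 0 ω ^ 1 * e 1 ω ^ 1 * e 2 ω ^ 2 * e 3 ω ^ 0 * e 4 ω ^ 0 * e 5 ω ^ 4)) := (M1_25).1.const_mul _
  have I1_26 : Integrable (fun ω => (2*x2^3*x3 + 6*x1*x2^2*x4) * (e 0 ω ^ 1 * e 1 ω ^ 1 * e 2 ω ^ 2 * e 3 ω ^ 0 * e 4 ω ^ 1 * e 5 ω ^ 3)) := (M1_26).1.const_mul _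
  have I1_27 : Integrable (fun ω => (6*x1*x2^2*x3 + 6*x1^2*x2*x4) * (e 0 ω ^ 1 * e 1 ω ^ 1 * e 2 ω ^ 2 * e 3 ω ^ 0 * e 4 ω ^ 2 * e 5 ω ^ 2)) := (M1_27).1.const_mul _
  have I1_28 : Integrable (fun ω => (6*x1^2*x2*x3 + 2*x1^3*x4) * (e 0 ω ^ 1 * e 1 ω ^ 1 * e 2 ω ^ 2 * e 3 ω ^ 0 * e 4 ω ^ 3 * e 5 ω ^ 1)) := (M1_28).1.const_mul _
  have I1_29 : Integrable (fun ω => (2*x1^3*x3) * (e 0 ω ^ 1 * e 1 ω ^ 1 * e 2 ω ^ 2 * e 3 ω ^ 0 * e 4 ω ^ 4 * e 5 ω ^ 0)) := (M1_29).1.const_mul _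
  have I1_30 : Integrable (fun ω => (x2^2*x4^2) * (e 0 ω ^ 2 * e 1 ω ^ 0 * e 2 ω ^ 0 * e 3 ω ^ 2 * e 4 ω ^ 0 * e 5 ω ^ 4)) := (M1_30).1.const_mul _
  have I1_31 : Integrable (fun ω => (2*x2^2*x3*x4 + 2*x1*x2*x4^2) * (e 0 ω ^ 2 * e 1 ω ^ 0 * e 2 ω ^ 0 * e 3 ω ^ 2 * e 4 ω ^ 1 * e 5 ω ^ 3)) := (M1_31).1.const_mul _
  have I1_32 : Integrable (fun ω => (x2^2*x3^2 + 4*x1*x2*x3*x4 + x1^2*x4^2) * (e 0 ω ^ 2 * e 1 ω ^ 0 * e 2 ω ^ 0 * e 3 ω ^ 2 * e 4 ω ^ 2 * e 5 ω ^ 2)) := (M1_32).1.const_mul _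
  have I1_33 : Integrable (fun ω => (2*x1*x2*x3^2 + 2*x1^2*x3*x4) * (e 0 ω ^ 2 * e 1 ω ^ 0 * e 2 ω ^ 0 * e 3 ω ^ 2 * e 4 ω ^ 3 * e 5 ω ^ 1)) := (M1_33).1.const_mul _
  have I1_34 : Integrable (fun ω => (x1^2*x3^2) * (e 0 ω ^ 2 * e 1 ω ^ 0 * e 2 ω ^ 0 * e 3 ω ^ 2 * e 4 ω ^ 4 * e 5 ω ^ 0)) := (M1_34).1.const_mul _
  have I1_35 : Integrable (fun ω => (2*x2^3*x4) * (e 0 ω ^ 2 * e 1 ω ^ 0 * e 2 ω ^ 1 * e 3 ω ^ 1 * e 4 ω ^ 0 * e 5 ω ^ 4)) := (M1_35).1.const_mul _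
  have I1_36 : Integrable (fun ω => (2*x2^3*x3 + 6*x1*x2^2*x4) * (e 0 ω ^ 2 * e 1 ω ^ 0 * e 2 ω ^ 1 * e 3 ω ^ 1 * e 4 ω ^ 1 * e 5 ω ^ 3)) := (M1_36).1.const_mul _
  have I1_37 : Integrable (fun ω => (6*x1*x2^2*x3 + 6*x1^2*x2*x4) * (e 0 ω ^ 2 * e 1 ω ^ 0 * e 2 ω ^ 1 * e 3 ω ^ 1 * e 4 ω ^ 2 * e 5 ω ^ 2)) := (M1_37).1.const_mul _
  have I1_38 : Integrable (fun ω => (6*x1^2*x2*x3 + 2*x1^3*x4) * (e 0 ω ^ 2 * e 1 ω ^ 0 * e 2 ω ^ 1 * e 3 ω ^ 1 * e 4 ω ^ 3 * e 5 ω ^ 1)) := (M1_38).1.const_mul _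
  have I1_39 : Integrable (fun ω => (2*x1^3*x3) * (e 0 ω ^ 2 * e 1 ω ^ 0 * e 2 ω ^ 1 * e 3 ω ^ 1 * e 4 ω ^ 4 * e 5 ω ^ 0)) := (M1_39).1.const_mul _
  have I1_40 : Integrable (fun ω => (x2^4) * (e 0 ω ^ 2 * e 1 ω ^ 0 * e 2 ω ^ 2 * e 3 ω ^ 0 * e 4 ω ^ 0 * e 5 ω ^ 4)) := (M1_40).1.const_mul _
  have I1_41 : Integrable (fun ω => (4*x1*x2^3) * (e 0 ω ^ 2 * e 1 ω ^ 0 * e 2 ω ^ 2 * e 3 ω ^ 0 * e 4 ω ^ 1 * e 5 ω ^ 3)) := (M1_41).1.const_mul _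
  have I1_42 : Integrable (fun ω => (6*x1^2*x2^2) * (e 0 ω ^ 2 * e 1 ω ^ 0 * e 2 ω ^ 2 * e 3 ω ^ 0 * e 4 ω ^ 2 * e 5 ω ^ 2)) := (M1_42).1.const_mul _
  have I1_43 : Integrable (fun ω => (4*x1^3*x2) * (e 0 ω ^ 2 * e 1 ω ^ 0 * e 2 ω ^ 2 * e 3 ω ^ 0 * e 4 ω ^ 3 * e 5 ω ^ 1)) := (M1_43).1.const_mul _
  have I1_44 : Integrable (fun ω => (x1^4) * (e 0 ω ^ 2 * e 1 ω ^ 0 * e 2 ω ^ 2 * e 3 ω ^ 0 * e 4 ω ^ 4 * e 5 ω ^ 0)) := (M1_44).1.const_mul _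
  have E1 : (∫ ω, (kronCoord (e 0 ω) (e 1 ω) (e 4 ω) (e 5 ω) x1 x2 x3 x4) ^ 2 * (kronCoord (e 2 ω) (e 3 ω) (e 4 ω) (e 5 ω) x1 x2 x3 x4) ^ 2) = (x4^4) * (∫ ω, e 5 ω ^ 4) + (6*x3^2*x4^2) + (x3^4) * (∫ ω, e 4 ω ^ 4) + (x2^2*x4^2) * (∫ ω, e 5 ω ^ 4) + (x2^2*x3^2 + 4*x1*x2*x3*x4 + x1^2*x4^2) + (x1^2*x3^2) * (∫ ω, e 4 ω ^ 4) + (x2^2*x4^2) * (∫ ω, e 5 ω ^ 4) + (x2^2*x3^2 + 4*x1*x2*x3*x4 + x1^2*x4^2) + (x1^2*x3^2) * (∫ ω, e 4 ω ^ 4) + (x2^4) * (∫ ω, e 5 ω ^ 4) + (6*x1^2*x2^2) + (x1^4) * (∫ ω, e 4 ω ^ 4) := by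
    have hf : (fun ω => (kronCoord (e 0 ω) (e 1 ω) (e 4 ω) (e 5 ω) x1 x2 x3 x4) ^ 2 * (kronCoord (e 2 ω) (e 3 ω) (e 4 ω) (e 5 ω) x1 x2 x3 x4) ^ 2) = (fun ω => (([(fun ω => (x4^4) * (e 0 ω ^ 0 * e 1 ω ^ 2 * e 2 ω ^ 0 * e 3 ω ^ 2 * e 4 ω ^ 0 * e 5 ω ^ 4)),
      (fun ω => (4*x3*x4^3) * (e 0 ω ^ 0 * e 1 ω ^ 2 * e 2 ω ^ 0 * e 3 ω ^ 2 * e 4 ω ^ 1 * e 5 ω ^ 3)),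
      (fun ω => (6*x3^2*x4^2) * (e 0 ω ^ 0 * e 1 ω ^ 2 * e 2 ω ^ 0 * e 3 ω ^ 2 * e 4 ω ^ 2 * e 5 ω ^ 2)),
      (fun ω => (4*x3^3*x4) * (e 0 ω ^ 0 * e 1 ω ^ 2 * e 2 ω ^ 0 * e 3 ω ^ 2 * e 4 ω ^ 3 * e 5 ω ^ 1)),
      (fun ω => (x3^4) * (e 0 ω ^ 0 * e 1 ω ^ 2 * e 2 ω ^ 0 * e 3 ω ^ 2 * e 4 ω ^ 4 * e 5 ω ^ 0)),
      (fun ω => (2*x2*x4^3) * (e 0 ω ^ 0 * e 1 ω ^ 2 * e 2 ω ^ 1 * e 3 ω ^ 1 * e 4 ω ^ 0 * e 5 ω ^ 4)),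
      (fun ω => (6*x2*x3*x4^2 + 2*x1*x4^3) * (e 0 ω ^ 0 * e 1 ω ^ 2 * e 2 ω ^ 1 * e 3 ω ^ 1 * e 4 ω ^ 1 * e 5 ω ^ 3)),
      (fun ω => (6*x2*x3^2*x4 + 6*x1*x3*x4^2) * (e 0 ω ^ 0 * e 1 ω ^ 2 * e 2 ω ^ 1 * e 3 ω ^ 1 * e 4 ω ^ 2 * e 5 ω ^ 2)),
      (fun ω => (2*x2*x3^3 + 6*x1*x3^2*x4) * (e 0 ω ^ 0 * e 1 ω ^ 2 * e 2 ω ^ 1 * e 3 ω ^ 1 * e 4 ω ^ 3 * e 5 ω ^ 1)),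
      (fun ω => (2*x1*x3^3) * (e 0 ω ^ 0 * e 1 ω ^ 2 * e 2 ω ^ 1 * e 3 ω ^ 1 * e 4 ω ^ 4 * e 5 ω ^ 0)),
      (fun ω => (x2^2*x4^2) * (e 0 ω ^ 0 * e 1 ω ^ 2 * e 2 ω ^ 2 * e 3 ω ^ 0 * e 4 ω ^ 0 * e 5 ω ^ 4)),
      (fun ω => (2*x2^2*x3*x4 + 2*x1*x2*x4^2) * (e 0 ω ^ 0 * e 1 ω ^ 2 * e 2 ω ^ 2 * e 3 ω ^ 0 * e 4 ω ^ 1 * e 5 ω ^ 3)),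
      (fun ω => (x2^2*x3^2 + 4*x1*x2*x3*x4 + x1^2*x4^2) * (e 0 ω ^ 0 * e 1 ω ^ 2 * e 2 ω ^ 2 * e 3 ω ^ 0 * e 4 ω ^ 2 * e 5 ω ^ 2)),
      (fun ω => (2*x1*x2*x3^2 + 2*x1^2*x3*x4) * (e 0 ω ^ 0 * e 1 ω ^ 2 * e 2 ω ^ 2 * e 3 ω ^ 0 * e 4 ω ^ 3 * e 5 ω ^ 1)),
      (fun ω => (x1^2*x3^2) * (e 0 ω ^ 0 * e 1 ω ^ 2 * e 2 ω ^ 2 * e 3 ω ^ 0 * e 4 ω ^ 4 * e 5 ω ^ 0)),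
      (fun ω => (2*x2*x4^3) * (e 0 ω ^ 1 * e 1 ω ^ 1 * e 2 ω ^ 0 * e 3 ω ^ 2 * e 4 ω ^ 0 * e 5 ω ^ 4)),
      (fun ω => (6*x2*x3*x4^2 + 2*x1*x4^3) * (e 0 ω ^ 1 * e 1 ω ^ 1 * e 2 ω ^ 0 * e 3 ω ^ 2 * e 4 ω ^ 1 * e 5 ω ^ 3)),
      (fun ω => (6*x2*x3^2*x4 + 6*x1*x3*x4^2) * (e 0 ω ^ 1 * e 1 ω ^ 1 * e 2 ω ^ 0 * e 3 ω ^ 2 * e 4 ω ^ 2 * e 5 ω ^ 2)),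
      (fun ω => (2*x2*x3^3 + 6*x1*x3^2*x4) * (e 0 ω ^ 1 * e 1 ω ^ 1 * e 2 ω ^ 0 * e 3 ω ^ 2 * e 4 ω ^ 3 * e 5 ω ^ 1)),
      (fun ω => (2*x1*x3^3) * (e 0 ω ^ 1 * e 1 ω ^ 1 * e 2 ω ^ 0 * e 3 ω ^ 2 * e 4 ω ^ 4 * e 5 ω ^ 0)),
      (fun ω => (4*x2^2*x4^2) * (e 0 ω ^ 1 * e 1 ω ^ 1 * e 2 ω ^ 1 * e 3 ω ^ 1 * e 4 ω ^ 0 * e 5 ω ^ 4)),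
      (fun ω => (8*x2^2*x3*x4 + 8*x1*x2*x4^2) * (e 0 ω ^ 1 * e 1 ω ^ 1 * e 2 ω ^ 1 * e 3 ω ^ 1 * e 4 ω ^ 1 * e 5 ω ^ 3)),
      (fun ω => (4*x2^2*x3^2 + 16*x1*x2*x3*x4 + 4*x1^2*x4^2) * (e 0 ω ^ 1 * e 1 ω ^ 1 * e 2 ω ^ 1 * e 3 ω ^ 1 * e 4 ω ^ 2 * e 5 ω ^ 2)),
      (fun ω => (8*x1*x2*x3^2 + 8*x1^2*x3*x4) * (e 0 ω ^ 1 * e 1 ω ^ 1 * e 2 ω ^ 1 * e 3 ω ^ 1 * e 4 ω ^ 3 * e 5 ω ^ 1)),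
      (fun ω => (4*x1^2*x3^2) * (e 0 ω ^ 1 * e 1 ω ^ 1 * e 2 ω ^ 1 * e 3 ω ^ 1 * e 4 ω ^ 4 * e 5 ω ^ 0)),
      (fun ω => (2*x2^3*x4) * (e 0 ω ^ 1 * e 1 ω ^ 1 * e 2 ω ^ 2 * e 3 ω ^ 0 * e 4 ω ^ 0 * e 5 ω ^ 4)),
      (fun ω => (2*x2^3*x3 + 6*x1*x2^2*x4) * (e 0 ω ^ 1 * e 1 ω ^ 1 * e 2 ω ^ 2 * e 3 ω ^ 0 * e 4 ω ^ 1 * e 5 ω ^ 3)),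
      (fun ω => (6*x1*x2^2*x3 + 6*x1^2*x2*x4) * (e 0 ω ^ 1 * e 1 ω ^ 1 * e 2 ω ^ 2 * e 3 ω ^ 0 * e 4 ω ^ 2 * e 5 ω ^ 2)),
      (fun ω => (6*x1^2*x2*x3 + 2*x1^3*x4) * (e 0 ω ^ 1 * e 1 ω ^ 1 * e 2 ω ^ 2 * e 3 ω ^ 0 * e 4 ω ^ 3 * e 5 ω ^ 1)),
      (fun ω => (2*x1^3*x3) * (e 0 ω ^ 1 * e 1 ω ^ 1 * e 2 ω ^ 2 * e 3 ω ^ 0 * e 4 ω ^ 4 * e 5 ω ^ 0)),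
      (fun ω => (x2^2*x4^2) * (e 0 ω ^ 2 * e 1 ω ^ 0 * e 2 ω ^ 0 * e 3 ω ^ 2 * e 4 ω ^ 0 * e 5 ω ^ 4)),
      (fun ω => (2*x2^2*x3*x4 + 2*x1*x2*x4^2) * (e 0 ω ^ 2 * e 1 ω ^ 0 * e 2 ω ^ 0 * e 3 ω ^ 2 * e 4 ω ^ 1 * e 5 ω ^ 3)),
      (fun ω => (x2^2*x3^2 + 4*x1*x2*x3*x4 + x1^2*x4^2) * (e 0 ω ^ 2 * e 1 ω ^ 0 * e 2 ω ^ 0 * e 3 ω ^ 2 * e 4 ω ^ 2 * e 5 ω ^ 2)),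
      (fun ω => (2*x1*x2*x3^2 + 2*x1^2*x3*x4) * (e 0 ω ^ 2 * e 1 ω ^ 0 * e 2 ω ^ 0 * e 3 ω ^ 2 * e 4 ω ^ 3 * e 5 ω ^ 1)),
      (fun ω => (x1^2*x3^2) * (e 0 ω ^ 2 * e 1 ω ^ 0 * e 2 ω ^ 0 * e 3 ω ^ 2 * e 4 ω ^ 4 * e 5 ω ^ 0)),
      (fun ω => (2*x2^3*x4) * (e 0 ω ^ 2 * e 1 ω ^ 0 * e 2 ω ^ 1 * e 3 ω ^ 1 * e 4 ω ^ 0 * e 5 ω ^ 4)),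
      (fun ω => (2*x2^3*x3 + 6*x1*x2^2*x4) * (e 0 ω ^ 2 * e 1 ω ^ 0 * e 2 ω ^ 1 * e 3 ω ^ 1 * e 4 ω ^ 1 * e 5 ω ^ 3)),
      (fun ω => (6*x1*x2^2*x3 + 6*x1^2*x2*x4) * (e 0 ω ^ 2 * e 1 ω ^ 0 * e 2 ω ^ 1 * e 3 ω ^ 1 * e 4 ω ^ 2 * e 5 ω ^ 2)),
      (fun ω => (6*x1^2*x2*x3 + 2*x1^3*x4) * (e 0 ω ^ 2 * e 1 ω ^ 0 * e 2 ω ^ 1 * e 3 ω ^ 1 * e 4 ω ^ 3 * e 5 ω ^ 1)),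
      (fun ω => (2*x1^3*x3) * (e 0 ω ^ 2 * e 1 ω ^ 0 * e 2 ω ^ 1 * e 3 ω ^ 1 * e 4 ω ^ 4 * e 5 ω ^ 0)),
      (fun ω => (x2^4) * (e 0 ω ^ 2 * e 1 ω ^ 0 * e 2 ω ^ 2 * e 3 ω ^ 0 * e 4 ω ^ 0 * e 5 ω ^ 4)),
      (fun ω => (4*x1*x2^3) * (e 0 ω ^ 2 * e 1 ω ^ 0 * e 2 ω ^ 2 * e 3 ω ^ 0 * e 4 ω ^ 1 * e 5 ω ^ 3)),
      (fun ω => (6*x1^2*x2^2) * (e 0 ω ^ 2 * e 1 ω ^ 0 * e 2 ω ^ 2 * e 3 ω ^ 0 * e 4 ω ^ 2 * e 5 ω ^ 2)),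
      (fun ω => (4*x1^3*x2) * (e 0 ω ^ 2 * e 1 ω ^ 0 * e 2 ω ^ 2 * e 3 ω ^ 0 * e 4 ω ^ 3 * e 5 ω ^ 1)),
      (fun ω => (x1^4) * (e 0 ω ^ 2 * e 1 ω ^ 0 * e 2 ω ^ 2 * e 3 ω ^ 0 * e 4 ω ^ 4 * e 5 ω ^ 0))] : List (Ω → ℝ)).map (fun f => f ω)).sum) := by
      funext ω; simp only [kronCoord, List.map_cons, List.map_nil, List.sum_cons, List.sum_nil]; ring
    rw [hf, integral_sum_list _ (by
      simp only [List.forall_mem_cons, List.forall_mem_nil, and_true]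
      exact ⟨I1_0, I1_1, I1_2, I1_3, I1_4, I1_5, I1_6, I1_7, I1_8, I1_9, I1_10, I1_11, I1_12, I1_13, I1_14, I1_15, I1_16, I1_17, I1_18, I1_19, I1_20, I1_21, I1_22, I1_23, I1_24, I1_25, I1_26, I1_27, I1_28, I1_29, I1_30, I1_31, I1_32, I1_33, I1_34, I1_35, I1_36, I1_37, I1_38, I1_39, I1_40, I1_41, I1_42, I1_43, I1_44, List.forall_mem_nil _⟩)]
    simp only [List.map_cons, List.map_nil, List.sum_cons, List.sum_nil, add_zero]
    simp only [integral_const_mul]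
    rw [(M1_0).2, (M1_1).2, (M1_2).2, (M1_3).2, (M1_4).2, (M1_5).2]
    rw [(M1_6).2, (M1_7).2, (M1_8).2, (M1_9).2, (M1_10).2, (M1_11).2]
    rw [(M1_12).2, (M1_13).2, (M1_14).2, (M1_15).2, (M1_16).2, (M1_17).2]
    rw [(M1_18).2, (M1_19).2, (M1_20).2, (M1_21).2, (M1_22).2, (M1_23).2]
    rw [(M1_24).2, (M1_25).2, (M1_26).2, (M1_27).2, (M1_28).2, (M1_29).2]
    rw [(M1_30).2, (M1_31).2, (M1_32).2, (M1_33).2, (M1_34).2, (M1_35).2]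
    rw [(M1_36).2, (M1_37).2, (M1_38).2, (M1_39).2, (M1_40).2, (M1_41).2]
    rw [(M1_42).2, (M1_43).2, (M1_44).2]
    simp only [pow_zero, pow_one, integral_const, measure_univ, probReal_univ, ENNReal.toReal_one, smul_eq_mul, mul_one, one_mul, hvar, hmean, mul_zero, zero_mul, add_zero, zero_add]
    ring
  have M2_0 := mom6 e hmeas hindep hint 0 2 0 0 0 2 (by norm_num) (by norm_num) (by norm_num) (by norm_num) (by norm_num) (by norm_num)
  have M2_1 := mom6 e hmeas hindep hint 0 2 0 0 1 1 (by norm_num) (by norm_num) (by norm_num) (by norm_num) (by norm_num) (by norm_num)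
  have M2_2 := mom6 e hmeas hindep hint 0 2 0 0 2 0 (by norm_num) (by norm_num) (by norm_num) (by norm_num) (by norm_num) (by norm_num)
  have M2_3 := mom6 e hmeas hindep hint 1 1 0 0 0 2 (by norm_num) (by norm_num) (by norm_num) (by norm_num) (by norm_num) (by norm_num)
  have M2_4 := mom6 e hmeas hindep hint 1 1 0 0 1 1 (by norm_num) (by norm_num) (by norm_num) (by norm_num) (by norm_num) (by norm_num)
  have M2_5 := mom6 e hmeas hindep hint 1 1 0 0 2 0 (by norm_num) (by norm_num) (by norm_num) (by norm_num) (by norm_num) (by norm_num)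
  have M2_6 := mom6 e hmeas hindep hint 2 0 0 0 0 2 (by norm_num) (by norm_num) (by norm_num) (by norm_num) (by norm_num) (by norm_num)
  have M2_7 := mom6 e hmeas hindep hint 2 0 0 0 1 1 (by norm_num) (by norm_num) (by norm_num) (by norm_num) (by norm_num) (by norm_num)
  have M2_8 := mom6 e hmeas hindep hint 2 0 0 0 2 0 (by norm_num) (by norm_num) (by norm_num) (by norm_num) (by norm_num) (by norm_num)
  have I2_0 : Integrable (fun ω => (x4^2) * (e 0 ω ^ 0 * e 1 ω ^ 2 * e 2 ω ^ 0 * e 3 ω ^ 0 * e 4 ω ^ 0 * e 5 ω ^ 2)) := (M2_0).1.const_mul _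
  have I2_1 : Integrable (fun ω => (2*x3*x4) * (e 0 ω ^ 0 * e 1 ω ^ 2 * e 2 ω ^ 0 * e 3 ω ^ 0 * e 4 ω ^ 1 * e 5 ω ^ 1)) := (M2_1).1.const_mul _
  have I2_2 : Integrable (fun ω => (x3^2) * (e 0 ω ^ 0 * e 1 ω ^ 2 * e 2 ω ^ 0 * e 3 ω ^ 0 * e 4 ω ^ 2 * e 5 ω ^ 0)) := (M2_2).1.const_mul _
  have I2_3 : Integrable (fun ω => (2*x2*x4) * (e 0 ω ^ 1 * e 1 ω ^ 1 * e 2 ω ^ 0 * e 3 ω ^ 0 * e 4 ω ^ 0 * e 5 ω ^ 2)) := (M2_3).1.const_mul _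
  have I2_4 : Integrable (fun ω => (2*x2*x3 + 2*x1*x4) * (e 0 ω ^ 1 * e 1 ω ^ 1 * e 2 ω ^ 0 * e 3 ω ^ 0 * e 4 ω ^ 1 * e 5 ω ^ 1)) := (M2_4).1.const_mul _
  have I2_5 : Integrable (fun ω => (2*x1*x3) * (e 0 ω ^ 1 * e 1 ω ^ 1 * e 2 ω ^ 0 * e 3 ω ^ 0 * e 4 ω ^ 2 * e 5 ω ^ 0)) := (M2_5).1.const_mul _
  have I2_6 : Integrable (fun ω => (x2^2) * (e 0 ω ^ 2 * e 1 ω ^ 0 * e 2 ω ^ 0 * e 3 ω ^ 0 * e 4 ω ^ 0 * e 5 ω ^ 2)) := (M2_6).1.const_mul _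
  have I2_7 : Integrable (fun ω => (2*x1*x2) * (e 0 ω ^ 2 * e 1 ω ^ 0 * e 2 ω ^ 0 * e 3 ω ^ 0 * e 4 ω ^ 1 * e 5 ω ^ 1)) := (M2_7).1.const_mul _
  have I2_8 : Integrable (fun ω => (x1^2) * (e 0 ω ^ 2 * e 1 ω ^ 0 * e 2 ω ^ 0 * e 3 ω ^ 0 * e 4 ω ^ 2 * e 5 ω ^ 0)) := (M2_8).1.const_mul _
  have E2 : (∫ ω, (kronCoord (e 0 ω) (e 1 ω) (e 4 ω) (e 5 ω) x1 x2 x3 x4) ^ 2) = (x4^2) + (x3^2) + (x2^2) + (x1^2) := by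
    have hf : (fun ω => (kronCoord (e 0 ω) (e 1 ω) (e 4 ω) (e 5 ω) x1 x2 x3 x4) ^ 2) = (fun ω => (([(fun ω => (x4^2) * (e 0 ω ^ 0 * e 1 ω ^ 2 * e 2 ω ^ 0 * e 3 ω ^ 0 * e 4 ω ^ 0 * e 5 ω ^ 2)),
      (fun ω => (2*x3*x4) * (e 0 ω ^ 0 * e 1 ω ^ 2 * e 2 ω ^ 0 * e 3 ω ^ 0 * e 4 ω ^ 1 * e 5 ω ^ 1)),
      (fun ω => (x3^2) * (e 0 ω ^ 0 * e 1 ω ^ 2 * e 2 ω ^ 0 * e 3 ω ^ 0 * e 4 ω ^ 2 * e 5 ω ^ 0)),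
      (fun ω => (2*x2*x4) * (e 0 ω ^ 1 * e 1 ω ^ 1 * e 2 ω ^ 0 * e 3 ω ^ 0 * e 4 ω ^ 0 * e 5 ω ^ 2)),
      (fun ω => (2*x2*x3 + 2*x1*x4) * (e 0 ω ^ 1 * e 1 ω ^ 1 * e 2 ω ^ 0 * e 3 ω ^ 0 * e 4 ω ^ 1 * e 5 ω ^ 1)),
      (fun ω => (2*x1*x3) * (e 0 ω ^ 1 * e 1 ω ^ 1 * e 2 ω ^ 0 * e 3 ω ^ 0 * e 4 ω ^ 2 * e 5 ω ^ 0)),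
      (fun ω => (x2^2) * (e 0 ω ^ 2 * e 1 ω ^ 0 * e 2 ω ^ 0 * e 3 ω ^ 0 * e 4 ω ^ 0 * e 5 ω ^ 2)),
      (fun ω => (2*x1*x2) * (e 0 ω ^ 2 * e 1 ω ^ 0 * e 2 ω ^ 0 * e 3 ω ^ 0 * e 4 ω ^ 1 * e 5 ω ^ 1)),
      (fun ω => (x1^2) * (e 0 ω ^ 2 * e 1 ω ^ 0 * e 2 ω ^ 0 * e 3 ω ^ 0 * e 4 ω ^ 2 * e 5 ω ^ 0))] : List (Ω → ℝ)).map (fun f => f ω)).sum) := by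
      funext ω; simp only [kronCoord, List.map_cons, List.map_nil, List.sum_cons, List.sum_nil]; ring
    rw [hf, integral_sum_list _ (by
      simp only [List.forall_mem_cons, List.forall_mem_nil, and_true]
      exact ⟨I2_0, I2_1, I2_2, I2_3, I2_4, I2_5, I2_6, I2_7, I2_8, List.forall_mem_nil _⟩)]
    simp only [List.map_cons, List.map_nil, List.sum_cons, List.sum_nil, add_zero]
    simp only [integral_const_mul]
    rw [(M2_0).2, (M2_1).2, (M2_2).2, (M2_3).2, (M2_4).2, (M2_5).2]
    rw [(M2_6).2, (M2_7).2, (M2_8).2]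
    simp only [pow_zero, pow_one, integral_const, measure_univ, probReal_univ, ENNReal.toReal_one, smul_eq_mul, mul_one, one_mul, hvar, hmean, mul_zero, zero_mul, add_zero, zero_add]
    ring
  have M3_0 := mom6 e hmeas hindep hint 0 0 0 2 0 2 (by norm_num) (by norm_num) (by norm_num) (by norm_num) (by norm_num) (by norm_num)
  have M3_1 := mom6 e hmeas hindep hint 0 0 0 2 1 1 (by norm_num) (by norm_num) (by norm_num) (by norm_num) (by norm_num) (by norm_num)
  have M3_2 := mom6 e hmeas hindep hint 0 0 0 2 2 0 (by norm_num) (by norm_num) (by norm_num) (by norm_num) (by norm_num) (by norm_num)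
  have M3_3 := mom6 e hmeas hindep hint 0 0 1 1 0 2 (by norm_num) (by norm_num) (by norm_num) (by norm_num) (by norm_num) (by norm_num)
  have M3_4 := mom6 e hmeas hindep hint 0 0 1 1 1 1 (by norm_num) (by norm_num) (by norm_num) (by norm_num) (by norm_num) (by norm_num)
  have M3_5 := mom6 e hmeas hindep hint 0 0 1 1 2 0 (by norm_num) (by norm_num) (by norm_num) (by norm_num) (by norm_num) (by norm_num)
  have M3_6 := mom6 e hmeas hindep hint 0 0 2 0 0 2 (by norm_num) (by norm_num) (by norm_num) (by norm_num) (by norm_num) (by norm_num)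
  have M3_7 := mom6 e hmeas hindep hint 0 0 2 0 1 1 (by norm_num) (by norm_num) (by norm_num) (by norm_num) (by norm_num) (by norm_num)
  have M3_8 := mom6 e hmeas hindep hint 0 0 2 0 2 0 (by norm_num) (by norm_num) (by norm_num) (by norm_num) (by norm_num) (by norm_num)
  have I3_0 : Integrable (fun ω => (x4^2) * (e 0 ω ^ 0 * e 1 ω ^ 0 * e 2 ω ^ 0 * e 3 ω ^ 2 * e 4 ω ^ 0 * e 5 ω ^ 2)) := (M3_0).1.const_mul _
  have I3_1 : Integrable (fun ω => (2*x3*x4) * (e 0 ω ^ 0 * e 1 ω ^ 0 * e 2 ω ^ 0 * e 3 ω ^ 2 * e 4 ω ^ 1 * e 5 ω ^ 1)) := (M3_1).1.const_mul _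
  have I3_2 : Integrable (fun ω => (x3^2) * (e 0 ω ^ 0 * e 1 ω ^ 0 * e 2 ω ^ 0 * e 3 ω ^ 2 * e 4 ω ^ 2 * e 5 ω ^ 0)) := (M3_2).1.const_mul _
  have I3_3 : Integrable (fun ω => (2*x2*x4) * (e 0 ω ^ 0 * e 1 ω ^ 0 * e 2 ω ^ 1 * e 3 ω ^ 1 * e 4 ω ^ 0 * e 5 ω ^ 2)) := (M3_3).1.const_mul _
  have I3_4 : Integrable (fun ω => (2*x2*x3 + 2*x1*x4) * (e 0 ω ^ 0 * e 1 ω ^ 0 * e 2 ω ^ 1 * e 3 ω ^ 1 * e 4 ω ^ 1 * e 5 ω ^ 1)) := (M3_4).1.const_mul _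
  have I3_5 : Integrable (fun ω => (2*x1*x3) * (e 0 ω ^ 0 * e 1 ω ^ 0 * e 2 ω ^ 1 * e 3 ω ^ 1 * e 4 ω ^ 2 * e 5 ω ^ 0)) := (M3_5).1.const_mul _
  have I3_6 : Integrable (fun ω => (x2^2) * (e 0 ω ^ 0 * e 1 ω ^ 0 * e 2 ω ^ 2 * e 3 ω ^ 0 * e 4 ω ^ 0 * e 5 ω ^ 2)) := (M3_6).1.const_mul _
  have I3_7 : Integrable (fun ω => (2*x1*x2) * (e 0 ω ^ 0 * e 1 ω ^ 0 * e 2 ω ^ 2 * e 3 ω ^ 0 * e 4 ω ^ 1 * e 5 ω ^ 1)) := (M3_7).1.const_mul _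
  have I3_8 : Integrable (fun ω => (x1^2) * (e 0 ω ^ 0 * e 1 ω ^ 0 * e 2 ω ^ 2 * e 3 ω ^ 0 * e 4 ω ^ 2 * e 5 ω ^ 0)) := (M3_8).1.const_mul _
  have E3 : (∫ ω, (kronCoord (e 2 ω) (e 3 ω) (e 4 ω) (e 5 ω) x1 x2 x3 x4) ^ 2) = (x4^2) + (x3^2) + (x2^2) + (x1^2) := by
    have hf : (fun ω => (kronCoord (e 2 ω) (e 3 ω) (e 4 ω) (e 5 ω) x1 x2 x3 x4) ^ 2) = (fun ω => (([(fun ω => (x4^2) * (e 0 ω ^ 0 * e 1 ω ^ 0 * e 2 ω ^ 0 * e 3 ω ^ 2 * e 4 ω ^ 0 * e 5 ω ^ 2)),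
      (fun ω => (2*x3*x4) * (e 0 ω ^ 0 * e 1 ω ^ 0 * e 2 ω ^ 0 * e 3 ω ^ 2 * e 4 ω ^ 1 * e 5 ω ^ 1)),
      (fun ω => (x3^2) * (e 0 ω ^ 0 * e 1 ω ^ 0 * e 2 ω ^ 0 * e 3 ω ^ 2 * e 4 ω ^ 2 * e 5 ω ^ 0)),
      (fun ω => (2*x2*x4) * (e 0 ω ^ 0 * e 1 ω ^ 0 * e 2 ω ^ 1 * e 3 ω ^ 1 * e 4 ω ^ 0 * e 5 ω ^ 2)),
      (fun ω => (2*x2*x3 + 2*x1*x4) * (e 0 ω ^ 0 * e 1 ω ^ 0 * e 2 ω ^ 1 * e 3 ω ^ 1 * e 4 ω ^ 1 * e 5 ω ^ 1)),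
      (fun ω => (2*x1*x3) * (e 0 ω ^ 0 * e 1 ω ^ 0 * e 2 ω ^ 1 * e 3 ω ^ 1 * e 4 ω ^ 2 * e 5 ω ^ 0)),
      (fun ω => (x2^2) * (e 0 ω ^ 0 * e 1 ω ^ 0 * e 2 ω ^ 2 * e 3 ω ^ 0 * e 4 ω ^ 0 * e 5 ω ^ 2)),
      (fun ω => (2*x1*x2) * (e 0 ω ^ 0 * e 1 ω ^ 0 * e 2 ω ^ 2 * e 3 ω ^ 0 * e 4 ω ^ 1 * e 5 ω ^ 1)),
      (fun ω => (x1^2) * (e 0 ω ^ 0 * e 1 ω ^ 0 * e 2 ω ^ 2 * e 3 ω ^ 0 * e 4 ω ^ 2 * e 5 ω ^ 0))] : List (Ω → ℝ)).map (fun f => f ω)).sum) := by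
      funext ω; simp only [kronCoord, List.map_cons, List.map_nil, List.sum_cons, List.sum_nil]; ring
    rw [hf, integral_sum_list _ (by
      simp only [List.forall_mem_cons, List.forall_mem_nil, and_true]
      exact ⟨I3_0, I3_1, I3_2, I3_3, I3_4, I3_5, I3_6, I3_7, I3_8, List.forall_mem_nil _⟩)]
    simp only [List.map_cons, List.map_nil, List.sum_cons, List.sum_nil, add_zero]
    simp only [integral_const_mul]
    rw [(M3_0).2, (M3_1).2, (M3_2).2, (M3_3).2, (M3_4).2, (M3_5).2]
    rw [(M3_6).2, (M3_7).2, (M3_8).2]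
    simp only [pow_zero, pow_one, integral_const, measure_univ, probReal_univ, ENNReal.toReal_one, smul_eq_mul, mul_one, one_mul, hvar, hmean, mul_zero, zero_mul, add_zero, zero_add]
    ring
  rw [E1, E2, E3]
  simp only [hvar]
  ring
end

section
/- Let y ∈ ℝ^M with M = ∏_{i=1}^d mᵢ arise as y = Rx for R = R₁ ⊗ ⋯ ⊗ R_d with i.i.d. mean-zero unit-variance entries of fourth moment Δ. For two distinct row multi-indices differing in exactly l of the d coordinates, E[y(i)² y(j)²] ≤ n^l (Δ + 3(n−1))^{d−l} N ℳ⁴, where n = max nᵢ, N = ∏nᵢ, ℳ = max_i |x(i)|. -/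
open MeasureTheory ProbabilityTheory Finset


lemma iIndep_integral_prod {Ω ι : Type*} [MeasureSpace Ω]
    [IsProbabilityMeasure (volume : Measure Ω)]
    (Y : ι → Ω → ℝ) (hind : iIndepFun Y volume)
    (hmeas : ∀ s, Measurable (Y s)) (hint : ∀ s, Integrable (Y s)) (S : Finset ι) :
    Integrable (fun ω => ∏ s ∈ S, Y s ω) ∧
      ∫ ω, ∏ s ∈ S, Y s ω = ∏ s ∈ S, ∫ ω, Y s ω := by
  classical
  induction S using Finset.induction with
  | empty => simp
  | @insert a S ha ih =>
    have hdep : IndepFun (∏ s ∈ S, Y s) (Y a) volume :=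
      hind.indepFun_finsetProd_of_notMem hmeas ha
    have hprod : (∏ s ∈ S, Y s) = fun ω => ∏ s ∈ S, Y s ω := by
      funext ω; simp
    rw [hprod] at hdep
    have hInt : Integrable (Y a * fun ω => ∏ s ∈ S, Y s ω) :=
      (hdep.symm).integrable_mul (hint a) ih.1
    have heq : (fun ω => ∏ s ∈ insert a S, Y s ω)
        = (Y a * fun ω => ∏ s ∈ S, Y s ω) := by
      funext ω; simp [Finset.prod_insert ha]
    constructor
    · rw [heq]; exact hInt
    · rw [show (∫ ω, ∏ s ∈ insert a S, Y s ω) = ∫ ω, (Y a * fun ω' => ∏ s ∈ S, Y s ω') ω by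
        exact integral_congr_ae (ae_of_all _ fun ω => by simp [Finset.prod_insert ha])]
      rw [(hdep.symm).integral_mul_eq_mul_integral (hint a).aestronglyMeasurable ih.1.aestronglyMeasurable]
      rw [Finset.prod_insert ha, ih.2]

lemma integrable_pow_le_four {Ω : Type*} [MeasureSpace Ω]
    [IsProbabilityMeasure (volume : Measure Ω)]
    {X : Ω → ℝ} (hm : Measurable X) (h4 : Integrable (fun ω => X ω ^ 4))
    {e : ℕ} (he : e ≤ 4) : Integrable (fun ω => X ω ^ e) := by
  have hbound : Integrable (fun ω => 1 + X ω ^ 4) := (integrable_const 1).add h4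
  refine hbound.mono ((hm.pow_const e).aestronglyMeasurable) (ae_of_all _ fun ω => ?_)
  have h40 : (0:ℝ) ≤ X ω ^ 4 := by positivity
  rw [Real.norm_eq_abs, Real.norm_eq_abs, abs_of_nonneg (by linarith : (0:ℝ) ≤ 1 + X ω ^ 4),
    abs_pow]
  rcases le_total (|X ω|) 1 with h | h
  · have : |X ω| ^ e ≤ 1 := pow_le_one₀ (abs_nonneg _) h
    linarith
  · have : |X ω| ^ e ≤ |X ω| ^ 4 := pow_le_pow_right₀ h he
    rw [show |X ω| ^ 4 = X ω ^ 4 by rw [← abs_pow]; exact abs_of_nonneg h40] at this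
    linarith

lemma prod_support_single {β : Type*} [Fintype β] [DecidableEq β] (f : β → ℝ) (w : β)
    (h : ∀ v, v ≠ w → f v = 1) : ∏ v, f v = f w := by
  rw [show f w = ∏ v ∈ {w}, f v by simp]
  exact (Finset.prod_subset (Finset.subset_univ _)
    (fun v _ hv => h v (by simpa using hv))).symm

lemma prod_support_pair {β : Type*} [Fintype β] [DecidableEq β] (f : β → ℝ) (w1 w2 : β)
    (hw : w1 ≠ w2) (h : ∀ v, v ≠ w1 → v ≠ w2 → f v = 1) : ∏ v, f v = f w1 * f w2 := by
  rw [show f w1 * f w2 = ∏ v ∈ {w1, w2}, f v by rw [Finset.prod_pair hw]]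
  exact (Finset.prod_subset (Finset.subset_univ _)
    (fun v _ hv => by
      simp only [Finset.mem_insert, Finset.mem_singleton, not_or] at hv
      exact h v hv.1 hv.2)).symm

lemma exists_lonely {α : Type*} [DecidableEq α] (a b c e : α)
    (h1 : ¬(a = b ∧ c = e)) (h2 : ¬(a = c ∧ b = e)) (h3 : ¬(a = e ∧ b = c)) :
    ∃ z : α, ((if a = z then 1 else 0) + (if b = z then 1 else 0)
      + (if c = z then 1 else 0) + (if e = z then 1 else 0) : ℕ) = 1 := by
  by_cases hab : a = b <;> by_cases hac : a = c <;> by_cases hae : a = e <;>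
    by_cases hbc : b = c <;> by_cases hbe : b = e <;> by_cases hce : c = e <;>
    subst_vars <;>
    first
      | (refine ⟨a, ?_⟩; simp_all [eq_comm]; done)
      | (refine ⟨b, ?_⟩; simp_all [eq_comm]; done)
      | (refine ⟨c, ?_⟩; simp_all [eq_comm]; done)
      | (refine ⟨e, ?_⟩; simp_all [eq_comm]; done)
      | (exfalso; simp_all; done)

lemma block_eval {m n : ℕ} (g : Fin m × Fin n → ℕ → ℝ) (Δ : ℝ)
    (h0 : ∀ v, g v 0 = 1) (h1 : ∀ v, g v 1 = 0) (h2 : ∀ v, g v 2 = 1) (h4 : ∀ v, g v 4 = Δ)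
    (r r' : Fin m) (a b c e : Fin n) :
    (∏ v : Fin m × Fin n, g v ((if v = (r,a) then 1 else 0) + (if v = (r,b) then 1 else 0)
      + (if v = (r',c) then 1 else 0) + (if v = (r',e) then 1 else 0))) =
    if r = r' then
      (Δ - 3) * (if a = b ∧ b = c ∧ c = e then 1 else 0)
        + ((if a = b ∧ c = e then 1 else 0) + (if a = c ∧ b = e then 1 else 0)
        + (if a = e ∧ b = c then 1 else 0))
    else (if a = b then 1 else 0) * (if c = e then 1 else 0) := by
  by_cases hr : r = r'
  · subst hr
    rw [if_pos rfl]
    by_cases hall : a = b ∧ b = c ∧ c = e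
    · obtain ⟨h1', h2', h3'⟩ := hall
      subst h1'; subst h2'; subst h3'
      rw [prod_support_single _ (r, a) (fun v hv => by
        simp only [if_neg hv]; simpa using h0 v)]
      norm_num [h4]
    · by_cases hp1 : a = b ∧ c = e
      · obtain ⟨e1, e2⟩ := hp1; subst e1; subst e2
        have hac : a ≠ c := fun h => hall ⟨rfl, h, rfl⟩
        have hw : ((r,a) : Fin m × Fin n) ≠ (r,c) := by simp [Prod.ext_iff, hac]
        rw [prod_support_pair _ (r, a) (r, c) hw (fun v hv1 hv2 => by
          simp only [if_neg hv1, if_neg hv2]; simpa using h0 v)]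
        norm_num [Prod.ext_iff, hac, Ne.symm hac, h2]
      · by_cases hp2 : a = c ∧ b = e
        · obtain ⟨e1, e2⟩ := hp2; subst e1; subst e2
          have hab : a ≠ b := fun h => hp1 ⟨h, h⟩
          have hw : ((r,a) : Fin m × Fin n) ≠ (r,b) := by simp [Prod.ext_iff, hab]
          rw [prod_support_pair _ (r, a) (r, b) hw (fun v hv1 hv2 => by
            simp only [if_neg hv1, if_neg hv2]; simpa using h0 v)]
          norm_num [Prod.ext_iff, hab, Ne.symm hab, h2]
        · by_cases hp3 : a = e ∧ b = c
          · obtain ⟨e1, e2⟩ := hp3; subst e1; subst e2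
            have hab : a ≠ b := fun h => hp1 ⟨h, h.symm⟩
            have hw : ((r,a) : Fin m × Fin n) ≠ (r,b) := by simp [Prod.ext_iff, hab]
            rw [prod_support_pair _ (r, a) (r, b) hw (fun v hv1 hv2 => by
              simp only [if_neg hv1, if_neg hv2]; simpa using h0 v)]
            norm_num [Prod.ext_iff, hab, Ne.symm hab, h2]
          · obtain ⟨z, hz⟩ := exists_lonely a b c e hp1 hp2 hp3
            rw [if_neg hall, if_neg hp1, if_neg hp2, if_neg hp3]
            rw [Finset.prod_eq_zero (Finset.mem_univ ((r, z) : Fin m × Fin n)) (by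
              have : ((if ((r,z) : Fin m × Fin n) = (r,a) then 1 else 0)
                  + (if ((r,z) : Fin m × Fin n) = (r,b) then 1 else 0)
                  + (if ((r,z) : Fin m × Fin n) = (r,c) then 1 else 0)
                  + (if ((r,z) : Fin m × Fin n) = (r,e) then 1 else 0) : ℕ) = 1 := by
                simpa [Prod.ext_iff, eq_comm] using hz
              rw [this]; exact h1 _)]
            ring
  · rw [if_neg hr]
    by_cases hab : a = b
    · subst hab
      by_cases hce : c = e
      · subst hce
        have hw : ((r,a) : Fin m × Fin n) ≠ (r',c) := by simp [Prod.ext_iff, hr]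
        rw [prod_support_pair _ (r, a) (r', c) hw (fun v hv1 hv2 => by
          simp only [if_neg hv1, if_neg hv2]; simpa using h0 v)]
        norm_num [Prod.ext_iff, hr, Ne.symm hr, h2]
      · rw [Finset.prod_eq_zero (Finset.mem_univ ((r', c) : Fin m × Fin n)) (by
          have : ((if ((r',c) : Fin m × Fin n) = (r,a) then 1 else 0)
              + (if ((r',c) : Fin m × Fin n) = (r,a) then 1 else 0)
              + (if ((r',c) : Fin m × Fin n) = (r',c) then 1 else 0)
              + (if ((r',c) : Fin m × Fin n) = (r',e) then 1 else 0) : ℕ) = 1 := by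
            simp [Prod.ext_iff, Ne.symm hr, hce]
          rw [this]; exact h1 _)]
        rw [if_neg hce]
        ring
    · rw [Finset.prod_eq_zero (Finset.mem_univ ((r, a) : Fin m × Fin n)) (by
        have : ((if ((r,a) : Fin m × Fin n) = (r,a) then 1 else 0)
            + (if ((r,a) : Fin m × Fin n) = (r,b) then 1 else 0)
            + (if ((r,a) : Fin m × Fin n) = (r',c) then 1 else 0)
            + (if ((r,a) : Fin m × Fin n) = (r',e) then 1 else 0) : ℕ) = 1 := by
          simp [Prod.ext_iff, hr, hab]
        rw [this]; exact h1 _)]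
      rw [if_neg hab]
      ring


lemma sum4_rows_distinct (n : ℕ) :
    (∑ a : Fin n, ∑ b : Fin n, ∑ c : Fin n, ∑ e : Fin n,
      ((if a = b then (1:ℝ) else 0) * (if c = e then 1 else 0))) = (n:ℝ)^2 := by
  simp [Finset.sum_ite_eq, ← Finset.sum_mul, ← Finset.mul_sum]
  ring

lemma sum4_rows_equal (n : ℕ) (Δ : ℝ) :
    (∑ a : Fin n, ∑ b : Fin n, ∑ c : Fin n, ∑ e : Fin n,
      ((Δ - 3) * (if a = b ∧ b = c ∧ c = e then (1:ℝ) else 0)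
        + ((if a = b ∧ c = e then (1:ℝ) else 0) + (if a = c ∧ b = e then 1 else 0)
        + (if a = e ∧ b = c then 1 else 0)))) = (n:ℝ) * (Δ + 3 * ((n:ℝ) - 1)) := by
  simp only [Finset.sum_add_distrib, ← Finset.mul_sum, ite_and]
  simp [Finset.sum_ite_eq, Finset.sum_ite_eq']
  ring

set_option maxHeartbeats 1000000 in
/-- Cross-moment bound: for `y = Rx` with `R = R₁ ⊗ ⋯ ⊗ R_d` having i.i.d.
mean-zero unit-variance entries with fourth moment `Δ`, and two distinct row
multi-indices `i ≠ j` differing in exactly `l` of the `d` coordinates,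
`E[y(i)² y(j)²] ≤ n^l (Δ + 3(n−1))^{d−l} N ℳ⁴`. -/
theorem ttrp_cross_moment_bound {Ω : Type*} [MeasureSpace Ω]
    [IsProbabilityMeasure (volume : Measure Ω)]
    {d : ℕ} (m n : Fin d → ℕ) (Δ : ℝ)
    (R : ∀ k : Fin d, Ω → Matrix (Fin (m k)) (Fin (n k)) ℝ)
    (hmeas : ∀ k i j, Measurable fun ω => R k ω i j)
    (hindep : iIndepFun
      (fun p : Σ k : Fin d, Fin (m k) × Fin (n k) => fun ω => R p.1 ω p.2.1 p.2.2) volume)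
    (hid : ∀ p q : Σ k : Fin d, Fin (m k) × Fin (n k),
      IdentDistrib (fun ω => R p.1 ω p.2.1 p.2.2) (fun ω => R q.1 ω q.2.1 q.2.2)
        volume volume)
    (hmean : ∀ k i j, ∫ ω, R k ω i j = 0)
    (hvar : ∀ k i j, ∫ ω, (R k ω i j) ^ 2 = 1)
    (hfour : ∀ k i j, ∫ ω, (R k ω i j) ^ 4 = Δ)
    (hint : ∀ k i j, Integrable fun ω => (R k ω i j) ^ 4)
    (x : (∀ k, Fin (n k)) → ℝ)
    (l : ℕ) (i j : ∀ k, Fin (m k)) (hij : i ≠ j)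
    (hl : (univ.filter fun k => i k ≠ j k).card = l) :
    ∫ ω, (∑ p : ∀ k, Fin (n k), (∏ k, R k ω (i k) (p k)) * x p) ^ 2 *
          (∑ p : ∀ k, Fin (n k), (∏ k, R k ω (j k) (p k)) * x p) ^ 2
      ≤ ((univ.sup n : ℕ) : ℝ) ^ l * (Δ + 3 * (((univ.sup n : ℕ) : ℝ) - 1)) ^ (d - l) *
          (∏ k, (n k : ℝ)) * (⨆ p, |x p|) ^ 4 := by
  classical
  -- degenerate case: some n k = 0
  by_cases hn : ∃ k, n k = 0
  · obtain ⟨k0, hk0⟩ := hn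
    have hempty : IsEmpty (∀ k, Fin (n k)) :=
      ⟨fun p => absurd (p k0).2 (by omega)⟩
    have hprod0 : (∏ k, (n k : ℝ)) = 0 :=
      Finset.prod_eq_zero (mem_univ k0) (by simp [hk0])
    rw [hprod0]
    simp [Finset.univ_eq_empty]
  push_neg at hn
  have hd : 0 < d := by
    rcases Nat.eq_zero_or_pos d with h | h
    · subst h; exact absurd (funext fun k => k.elim0) hij
    · exact h
  -- basic notation
  set ι := (Σ k : Fin d, Fin (m k) × Fin (n k)) with hι
  set X : ι → Ω → ℝ := fun s ω => R s.1 ω s.2.1 s.2.2 with hX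
  set EE : (∀ k, Fin (n k)) → (∀ k, Fin (n k)) → (∀ k, Fin (n k)) → (∀ k, Fin (n k)) → ι → ℕ :=
    fun p p' q q' s =>
      (if s.2 = (i s.1, p s.1) then 1 else 0) + (if s.2 = (i s.1, p' s.1) then 1 else 0)
      + (if s.2 = (j s.1, q s.1) then 1 else 0) + (if s.2 = (j s.1, q' s.1) then 1 else 0)
    with hEE
  have hE4 : ∀ p p' q q' s, EE p p' q q' s ≤ 4 := by
    intro p p' q q' s
    simp only [hEE]
    split_ifs <;> omega
  have hXmeas : ∀ s : ι, Measurable (X s) := fun s => hmeas s.1 s.2.1 s.2.2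
  have hΔ : 0 ≤ Δ := by
    have k0 : Fin d := ⟨0, hd⟩
    have c0 : Fin (n k0) := ⟨0, Nat.pos_of_ne_zero (hn k0)⟩
    rw [← hfour k0 (i k0) c0]
    exact integral_nonneg fun ω => by positivity
  -- moments
  set Mu : ι → ℕ → ℝ := fun s e => ∫ ω, X s ω ^ e with hMu
  have hMu0 : ∀ s, Mu s 0 = 1 := by
    intro s; simp [hMu, measure_univ]
  have hMu1 : ∀ s, Mu s 1 = 0 := by
    intro s; simp only [hMu, pow_one]; exact hmean s.1 s.2.1 s.2.2
  have hMu2 : ∀ s, Mu s 2 = 1 := fun s => hvar s.1 s.2.1 s.2.2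
  have hMu4 : ∀ s, Mu s 4 = Δ := fun s => hfour s.1 s.2.1 s.2.2
  -- pointwise expansion
  have key : ∀ (ω : Ω) (p p' q q' : ∀ k, Fin (n k)),
      ((∏ k, R k ω (i k) (p k)) * (∏ k, R k ω (i k) (p' k)))
        * ((∏ k, R k ω (j k) (q k)) * (∏ k, R k ω (j k) (q' k)))
      = ∏ s : ι, X s ω ^ EE p p' q q' s := by
    intro ω p p' q q'
    rw [← Finset.prod_mul_distrib, ← Finset.prod_mul_distrib, ← Finset.prod_mul_distrib]
    rw [show (∏ s : ι, X s ω ^ EE p p' q q' s)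
        = ∏ k, ∏ v : Fin (m k) × Fin (n k), X ⟨k, v⟩ ω ^ EE p p' q q' ⟨k, v⟩ from by
      rw [← Finset.univ_sigma_univ, Finset.prod_sigma]]
    refine Finset.prod_congr rfl fun k _ => ?_
    simp only [hEE, hX, pow_add]
    simp only [Finset.prod_mul_distrib, pow_ite, pow_one, pow_zero,
      Finset.prod_ite_eq', Finset.mem_univ, if_pos]
    ring
  have hfun : (fun ω => (∑ p : ∀ k, Fin (n k), (∏ k, R k ω (i k) (p k)) * x p) ^ 2 *
        (∑ p : ∀ k, Fin (n k), (∏ k, R k ω (j k) (p k)) * x p) ^ 2)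
      = fun ω => ∑ p : ∀ k, Fin (n k), ∑ q : ∀ k, Fin (n k),
          ∑ p' : ∀ k, Fin (n k), ∑ q' : ∀ k, Fin (n k),
          (x p * x p' * x q * x q') * ∏ s : ι, X s ω ^ EE p p' q q' s := by
    funext ω
    rw [sq, sq, Finset.sum_mul_sum, Finset.sum_mul_sum, Finset.sum_mul_sum]
    refine Finset.sum_congr rfl fun p _ => Finset.sum_congr rfl fun q _ => ?_
    rw [Finset.sum_mul_sum]
    refine Finset.sum_congr rfl fun p' _ => Finset.sum_congr rfl fun q' _ => ?_
    rw [← key ω p p' q q']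
    ring
  -- integrability and factorization for each term
  have hIndepPow : ∀ p p' q q', iIndepFun
      (fun s => fun ω => X s ω ^ EE p p' q q' s) volume := by
    intro p p' q q'
    exact hindep.comp (fun s y => y ^ EE p p' q q' s)
      (fun s => measurable_id.pow_const _)
  have hPowInt : ∀ p p' q q' (s : ι), Integrable (fun ω => X s ω ^ EE p p' q q' s) :=
    fun p p' q q' s => integrable_pow_le_four (hXmeas s)
      (hint s.1 s.2.1 s.2.2) (hE4 p p' q q' s)
  have hProdInt : ∀ p p' q q', Integrable (fun ω => ∏ s : ι, X s ω ^ EE p p' q q' s) :=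
    fun p p' q q' => (iIndep_integral_prod _ (hIndepPow p p' q q')
      (fun s => (hXmeas s).pow_const _) (hPowInt p p' q q') univ).1
  have hProdEq : ∀ p p' q q',
      ∫ ω, ∏ s : ι, X s ω ^ EE p p' q q' s = ∏ s : ι, Mu s (EE p p' q q' s) :=
    fun p p' q q' => (iIndep_integral_prod _ (hIndepPow p p' q q')
      (fun s => (hXmeas s).pow_const _) (hPowInt p p' q q') univ).2
  -- block values
  set D : ∀ k : Fin d, Fin (n k) → Fin (n k) → Fin (n k) → Fin (n k) → ℝ :=
    fun k a b c e =>
      if i k = j k then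
        (Δ - 3) * (if a = b ∧ b = c ∧ c = e then 1 else 0)
          + ((if a = b ∧ c = e then 1 else 0) + (if a = c ∧ b = e then 1 else 0)
          + (if a = e ∧ b = c then 1 else 0))
      else (if a = b then 1 else 0) * (if c = e then 1 else 0)
    with hD
  have hMuProd : ∀ p p' q q',
      (∏ s : ι, Mu s (EE p p' q q' s)) = ∏ k, D k (p k) (p' k) (q k) (q' k) := by
    intro p p' q q'
    rw [← Finset.univ_sigma_univ, Finset.prod_sigma]
    refine Finset.prod_congr rfl fun k _ => ?_
    exact block_eval (fun v e => Mu ⟨k, v⟩ e) Δ (fun v => hMu0 _) (fun v => hMu1 _)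
      (fun v => hMu2 _) (fun v => hMu4 _) (i k) (j k) (p k) (p' k) (q k) (q' k)
  have hDnonneg : ∀ k a b c e, 0 ≤ D k a b c e := by
    intro k a b c e
    simp only [hD]
    by_cases h : i k = j k
    · rw [if_pos h]
      by_cases hall : a = b ∧ b = c ∧ c = e
      · rw [if_pos hall, if_pos ⟨hall.1, hall.2.2⟩,
          if_pos ⟨hall.1.trans hall.2.1, hall.2.1.trans hall.2.2⟩,
          if_pos ⟨hall.1.trans (hall.2.1.trans hall.2.2), hall.2.1⟩]
        linarith
      · rw [if_neg hall, mul_zero, zero_add]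
        split_ifs <;> norm_num
    · rw [if_neg h]
      split_ifs <;> norm_num
  -- sup bound facts
  set ℳ : ℝ := ⨆ p, |x p| with hℳ
  have hxle : ∀ p, |x p| ≤ ℳ := fun p =>
    le_ciSup (f := fun p => |x p|) (Set.Finite.bddAbove (Set.finite_range _)) p
  have hℳ0 : 0 ≤ ℳ := by
    have p0 : ∀ k, Fin (n k) := fun k => ⟨0, Nat.pos_of_ne_zero (hn k)⟩
    exact (abs_nonneg _).trans (hxle p0)
  have hcle : ∀ p p' q q', x p * x p' * x q * x q' ≤ ℳ ^ 4 := by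
    intro p p' q q'
    have h1 : x p * x p' * x q * x q' ≤ |x p| * |x p'| * |x q| * |x q'| := by
      calc x p * x p' * x q * x q' ≤ |x p * x p' * x q * x q'| := le_abs_self _
        _ = |x p| * |x p'| * |x q| * |x q'| := by rw [abs_mul, abs_mul, abs_mul]
    have h2 : |x p| * |x p'| * |x q| * |x q'| ≤ ℳ * ℳ * ℳ * ℳ :=
      mul_le_mul (mul_le_mul (mul_le_mul (hxle p) (hxle p') (abs_nonneg _) hℳ0)
        (hxle q) (abs_nonneg _) (mul_nonneg hℳ0 hℳ0)) (hxle q') (abs_nonneg _)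
        (mul_nonneg (mul_nonneg hℳ0 hℳ0) hℳ0)
    calc x p * x p' * x q * x q' ≤ ℳ * ℳ * ℳ * ℳ := h1.trans h2
      _ = ℳ ^ 4 := by ring
  -- cast and cardinality facts
  set nn : ℕ := univ.sup n with hnn
  have hnnle : ∀ k, (n k : ℝ) ≤ (nn : ℝ) :=
    fun k => Nat.cast_le.mpr (Finset.le_sup (mem_univ k))
  have hnk1 : ∀ k, (1 : ℝ) ≤ (n k : ℝ) := fun k => by
    exact_mod_cast Nat.one_le_iff_ne_zero.mpr (hn k)
  set c : ℝ := Δ + 3 * ((nn : ℝ) - 1) with hc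
  set T : Fin d → ℝ := fun k => if i k = j k then (n k : ℝ) * c else (nn : ℝ) * (n k : ℝ)
    with hT
  have hcardP : (univ.filter fun k => i k = j k).card = d - l := by
    have h1 := Finset.card_filter_add_card_filter_not
      (s := (univ : Finset (Fin d))) (p := fun k => i k = j k)
    have h2 : (univ.filter fun k => ¬ (i k = j k)).card = l := hl
    have h3 : (univ : Finset (Fin d)).card = d := by simp
    omega
  have hSk : ∀ k, (∑ a, ∑ cc, ∑ b, ∑ e, D k a b cc e)
      = if i k = j k then (n k : ℝ) * (Δ + 3 * ((n k : ℝ) - 1)) else ((n k : ℝ))^2 := by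
    intro k
    simp only [hD]
    by_cases h : i k = j k
    · simp only [if_pos h]
      rw [← sum4_rows_equal (n k) Δ]
      exact Finset.sum_congr rfl fun a _ => Finset.sum_comm
    · simp only [if_neg h]
      rw [← sum4_rows_distinct (n k)]
      exact Finset.sum_congr rfl fun a _ => Finset.sum_comm
  have hST : ∀ k, (∑ a, ∑ cc, ∑ b, ∑ e, D k a b cc e) ≤ T k := by
    intro k
    rw [hSk]
    simp only [hT]
    by_cases h : i k = j k
    · rw [if_pos h, if_pos h]
      have : Δ + 3 * ((n k : ℝ) - 1) ≤ c := by
        rw [hc]; have := hnnle k; linarith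
      exact mul_le_mul_of_nonneg_left this (by positivity)
    · rw [if_neg h, if_neg h, sq]
      exact mul_le_mul_of_nonneg_right (hnnle k) (by positivity)
  have hS0 : ∀ k, 0 ≤ (∑ a, ∑ cc, ∑ b, ∑ e, D k a b cc e) := by
    intro k
    rw [hSk]
    by_cases h : i k = j k
    · rw [if_pos h]
      have := hnk1 k
      have : 0 ≤ Δ + 3 * ((n k : ℝ) - 1) := by linarith
      positivity
    · rw [if_neg h]; positivity
  have hTprod : (∏ k, T k) = (nn : ℝ) ^ l * c ^ (d - l) * ∏ k, (n k : ℝ) := by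
    rw [← Finset.prod_filter_mul_prod_filter_not univ (fun k => i k = j k) T]
    rw [Finset.prod_congr rfl (fun k hk => by
      rw [hT]; exact if_pos (mem_filter.mp hk).2 : ∀ k ∈ univ.filter fun k => i k = j k,
        T k = (n k : ℝ) * c)]
    rw [Finset.prod_congr rfl (fun k hk => by
      rw [hT]; exact if_neg (mem_filter.mp hk).2 : ∀ k ∈ univ.filter fun k => ¬ (i k = j k),
        T k = (nn : ℝ) * (n k : ℝ))]
    rw [Finset.prod_mul_distrib, Finset.prod_mul_distrib, Finset.prod_const,
      Finset.prod_const, hcardP]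
    rw [show (univ.filter fun k => ¬ (i k = j k)).card = l from hl]
    rw [← Finset.prod_filter_mul_prod_filter_not univ (fun k => i k = j k)
      (fun k => (n k : ℝ))]
    ring
  -- main computation
  calc ∫ ω, (∑ p : ∀ k, Fin (n k), (∏ k, R k ω (i k) (p k)) * x p) ^ 2 *
          (∑ p : ∀ k, Fin (n k), (∏ k, R k ω (j k) (p k)) * x p) ^ 2
      = ∑ p : ∀ k, Fin (n k), ∑ q : ∀ k, Fin (n k), ∑ p' : ∀ k, Fin (n k),
          ∑ q' : ∀ k, Fin (n k),
          (x p * x p' * x q * x q') * ∏ k, D k (p k) (p' k) (q k) (q' k) := by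
        rw [hfun]
        rw [integral_finset_sum _ (fun p _ =>
          integrable_finset_sum _ (fun q _ => integrable_finset_sum _ (fun p' _ =>
            integrable_finset_sum _ (fun q' _ => (hProdInt p p' q q').const_mul _))))]
        refine Finset.sum_congr rfl fun p _ => ?_
        rw [integral_finset_sum _ (fun q _ => integrable_finset_sum _ (fun p' _ =>
          integrable_finset_sum _ (fun q' _ => (hProdInt p p' q q').const_mul _)))]
        refine Finset.sum_congr rfl fun q _ => ?_
        rw [integral_finset_sum _ (fun p' _ =>
          integrable_finset_sum _ (fun q' _ => (hProdInt p p' q q').const_mul _))]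
        refine Finset.sum_congr rfl fun p' _ => ?_
        rw [integral_finset_sum _ (fun q' _ => (hProdInt p p' q q').const_mul _)]
        refine Finset.sum_congr rfl fun q' _ => ?_
        rw [integral_const_mul, hProdEq p p' q q', hMuProd p p' q q']
    _ ≤ ∑ p : ∀ k, Fin (n k), ∑ q : ∀ k, Fin (n k), ∑ p' : ∀ k, Fin (n k),
          ∑ q' : ∀ k, Fin (n k), ℳ ^ 4 * ∏ k, D k (p k) (p' k) (q k) (q' k) := by
        refine Finset.sum_le_sum fun p _ => Finset.sum_le_sum fun q _ =>
          Finset.sum_le_sum fun p' _ => Finset.sum_le_sum fun q' _ => ?_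
        exact mul_le_mul_of_nonneg_right (hcle p p' q q')
          (Finset.prod_nonneg fun k _ => hDnonneg k _ _ _ _)
    _ = ℳ ^ 4 * ∑ p : ∀ k, Fin (n k), ∑ q : ∀ k, Fin (n k), ∑ p' : ∀ k, Fin (n k),
          ∑ q' : ∀ k, Fin (n k), ∏ k, D k (p k) (p' k) (q k) (q' k) := by
        simp_rw [Finset.mul_sum]
    _ = ℳ ^ 4 * ∏ k, (∑ a, ∑ cc, ∑ b, ∑ e, D k a b cc e) := by
        congr 1
        calc (∑ p : ∀ k, Fin (n k), ∑ q : ∀ k, Fin (n k), ∑ p' : ∀ k, Fin (n k),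
              ∑ q' : ∀ k, Fin (n k), ∏ k, D k (p k) (p' k) (q k) (q' k))
            = ∑ p : ∀ k, Fin (n k), ∑ q : ∀ k, Fin (n k), ∑ p' : ∀ k, Fin (n k),
              ∏ k, ∑ e, D k (p k) (p' k) (q k) e := by
              refine Finset.sum_congr rfl fun p _ => Finset.sum_congr rfl fun q _ =>
                Finset.sum_congr rfl fun p' _ => ?_
              exact (Fintype.prod_sum (fun k e => D k (p k) (p' k) (q k) e)).symm
          _ = ∑ p : ∀ k, Fin (n k), ∑ q : ∀ k, Fin (n k),
              ∏ k, ∑ b, ∑ e, D k (p k) b (q k) e := by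
              refine Finset.sum_congr rfl fun p _ => Finset.sum_congr rfl fun q _ => ?_
              exact (Fintype.prod_sum (fun k b => ∑ e, D k (p k) b (q k) e)).symm
          _ = ∑ p : ∀ k, Fin (n k), ∏ k, ∑ cc, ∑ b, ∑ e, D k (p k) b cc e := by
              refine Finset.sum_congr rfl fun p _ => ?_
              exact (Fintype.prod_sum (fun k cc => ∑ b, ∑ e, D k (p k) b cc e)).symm
          _ = ∏ k, ∑ a, ∑ cc, ∑ b, ∑ e, D k a b cc e :=
              (Fintype.prod_sum (fun k a => ∑ cc, ∑ b, ∑ e, D k a b cc e)).symm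
    _ ≤ ℳ ^ 4 * ∏ k, T k := by
        refine mul_le_mul_of_nonneg_left ?_ (by positivity)
        exact Finset.prod_le_prod (fun k _ => hS0 k) (fun k _ => hST k)
    _ = ((univ.sup n : ℕ) : ℝ) ^ l * (Δ + 3 * (((univ.sup n : ℕ) : ℝ) - 1)) ^ (d - l) *
          (∏ k, (n k : ℝ)) * ℳ ^ 4 := by
        rw [hTprod]; ring
end
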